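/- arXiv:2009.11217 — 5 statements merged into one kernel-verified Lean document; each statement's English description precedes it below -/
import Mathlib

section
/- Let I ⊂ ℝ be a compact interval not containing 0, let μ > 0 and ε₀ > 0. If f ∈ L²(I) satisfies ∫_I f(t)(t − iε)^{−μ} dt = 0 for all ε ∈ (0, ε₀), then f = 0 almost everywhere on I. -/
set_option maxHeartbeats 1000000

open MeasureTheory

namespace Stmt2Aux

open Set Complex Filter

def Udom (a : ℝ) : Set ℂ := {z : ℂ | 0 < z.im ∨ z.re < a}

lemma isOpen_Udom (a : ℝ) : IsOpen (Udom a) :=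
  (isOpen_lt continuous_const Complex.continuous_im).union
    (isOpen_lt Complex.continuous_re continuous_const)

lemma preconnected_Udom (a : ℝ) : IsPreconnected (Udom a) := by
  have h1 : IsPreconnected {z : ℂ | 0 < z.im} := (convex_halfSpace_im_gt 0).isPreconnected
  have h2 : IsPreconnected {z : ℂ | z.re < a} := (convex_halfSpace_re_lt a).isPreconnected
  have hmem1 : ((a - 1 : ℝ) : ℂ) + Complex.I ∈ {z : ℂ | 0 < z.im} := by simp
  have hmem2 : ((a - 1 : ℝ) : ℂ) + Complex.I ∈ {z : ℂ | z.re < a} := by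
    simp [Complex.add_re]
  exact h1.union _ hmem1 hmem2 h2

lemma mem_slit {a b : ℝ} {z : ℂ} (hz : z ∈ Udom a) {t : ℝ} (ht : t ∈ Icc a b) :
    ((t : ℂ) - z) ∈ Complex.slitPlane := by
  rcases hz with h | h
  · exact Or.inr (by simp [Complex.sub_im]; linarith)
  · exact Or.inl (by simp [Complex.sub_re]; linarith [ht.1])

lemma lb {a b : ℝ} {z : ℂ} (hz : z ∈ Udom a) :
    ∃ m > 0, ∀ t ∈ Icc a b, m ≤ ‖(t : ℂ) - z‖ := by
  rcases hz with h | h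
  · refine ⟨z.im, h, fun t ht => ?_⟩
    have h1 := Complex.abs_im_le_norm ((t : ℂ) - z)
    have h2 : ((t : ℂ) - z).im = -z.im := by simp [Complex.sub_im]
    rw [h2, abs_neg, abs_of_pos h] at h1
    exact h1
  · refine ⟨a - z.re, by linarith, fun t ht => ?_⟩
    have h1 := Complex.abs_re_le_norm ((t : ℂ) - z)
    have h2 : ((t : ℂ) - z).re = t - z.re := by simp [Complex.sub_re]
    have h3 : a - z.re ≤ |((t : ℂ) - z).re| := by
      rw [h2]; exact le_trans (by linarith [ht.1]) (le_abs_self _)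
    linarith

lemma ne_zero_of_lb {m : ℝ} (hm : 0 < m) {w : ℂ} (h : m ≤ ‖w‖) : w ≠ 0 := by
  intro h0; rw [h0] at h; simp at h; linarith

lemma norm_kernel {w : ℂ} (hw : w ≠ 0) (ν : ℝ) :
    ‖w ^ (-(ν : ℂ))‖ = ‖w‖ ^ (-ν) := by
  rw [norm_cpow_of_ne_zero hw]
  simp

lemma contOn_kernel {a b : ℝ} {z : ℂ} (hz : z ∈ Udom a) {c : ℂ} :
    ContinuousOn (fun t : ℝ => ((t : ℂ) - z) ^ c) (Icc a b) := fun t ht =>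
  ((Complex.continuous_ofReal.continuousAt.sub continuousAt_const).cpow
    continuousAt_const (mem_slit hz ht)).continuousWithinAt

noncomputable def Kf (f : ℝ → ℂ) (a b ν : ℝ) (z : ℂ) : ℂ :=
  ∫ t in Icc a b, f t * ((t : ℂ) - z) ^ (-(ν : ℂ))

lemma integrable_kernel {f : ℝ → ℂ} {a b : ℝ}
    (hf1 : Integrable f (volume.restrict (Icc a b))) {ν : ℝ} (hν : 0 ≤ ν) {z : ℂ}
    (hz : z ∈ Udom a) :
    Integrable (fun t => f t * ((t : ℂ) - z) ^ (-(ν : ℂ))) (volume.restrict (Icc a b)) := by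
  obtain ⟨m, hm, hmle⟩ := lb (b := b) hz
  have hmeas : AEStronglyMeasurable (fun t : ℝ => ((t : ℂ) - z) ^ (-(ν : ℂ)))
      (volume.restrict (Icc a b)) :=
    (contOn_kernel (b := b) hz).aestronglyMeasurable measurableSet_Icc
  have hb : ∀ᵐ (t : ℝ) ∂(volume.restrict (Icc a b)),
      ‖((t : ℂ) - z) ^ (-(ν : ℂ))‖ ≤ m ^ (-ν) := by
    filter_upwards [ae_restrict_mem measurableSet_Icc] with t ht
    rw [norm_kernel (ne_zero_of_lb hm (hmle t ht)) ν]
    exact Real.rpow_le_rpow_of_nonpos hm (hmle t ht) (by linarith)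
  have h2 := hf1.bdd_mul hmeas hb
  have h3 : (fun t : ℝ => f t * ((t : ℂ) - z) ^ (-(ν : ℂ)))
      = fun t : ℝ => ((t : ℂ) - z) ^ (-(ν : ℂ)) * f t := funext fun t => mul_comm _ _
  rw [h3]; exact h2

lemma hasDerivAt_Kf {f : ℝ → ℂ} {a b : ℝ}
    (hf1 : Integrable f (volume.restrict (Icc a b))) {ν : ℝ} (hν : 0 ≤ ν) {z₀ : ℂ}
    (hz : z₀ ∈ Udom a) :
    HasDerivAt (Kf f a b ν) ((ν : ℂ) * Kf f a b (ν + 1) z₀) z₀ := by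
  obtain ⟨r₁, hr₁, hball⟩ := Metric.isOpen_iff.mp (isOpen_Udom a) z₀ hz
  obtain ⟨m, hm, hmle⟩ := lb (b := b) hz
  set r := min r₁ (m / 2) with hrdef
  have hrpos : 0 < r := lt_min hr₁ (by linarith)
  have hballU : ∀ z ∈ Metric.ball z₀ r, z ∈ Udom a := fun z hzz =>
    hball (Metric.ball_subset_ball (min_le_left _ _) hzz)
  have hlow : ∀ z ∈ Metric.ball z₀ r, ∀ t ∈ Icc a b, m / 2 ≤ ‖(t : ℂ) - z‖ := by
    intro z hzz t ht
    have h1 : ‖(t : ℂ) - z₀‖ ≤ ‖(t : ℂ) - z‖ + ‖z - z₀‖ := by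
      have := norm_add_le ((t : ℂ) - z) (z - z₀)
      simpa using this
    have h2 : ‖z - z₀‖ < m / 2 := by
      have := Metric.mem_ball.mp hzz
      rw [Complex.dist_eq] at this
      exact lt_of_lt_of_le this (min_le_right _ _)
    have h3 := hmle t ht
    linarith
  have hexp : (-(ν : ℂ) - 1) = -(((ν + 1 : ℝ)) : ℂ) := by push_cast; ring
  have key := hasDerivAt_integral_of_dominated_loc_of_deriv_le (μ := volume.restrict (Icc a b))
    (F := fun (z : ℂ) (t : ℝ) => f t * ((t : ℂ) - z) ^ (-(ν : ℂ)))
    (F' := fun (z : ℂ) (t : ℝ) => f t * ((ν : ℂ) * ((t : ℂ) - z) ^ (-(ν : ℂ) - 1)))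
    (x₀ := z₀) (bound := fun t => ν * (m / 2) ^ (-(ν + 1)) * ‖f t‖) (Metric.ball_mem_nhds z₀ hrpos)
    ?_ ?_ ?_ ?_ ?_ ?_
  · have heq : (∫ t in Icc a b, f t * ((ν : ℂ) * ((t : ℂ) - z₀) ^ (-(ν : ℂ) - 1)))
        = (ν : ℂ) * Kf f a b (ν + 1) z₀ := by
      rw [Kf, ← integral_const_mul]
      congr 1
      funext t
      rw [hexp]
      ring
    rw [← heq]
    exact key.2
  · exact ((isOpen_Udom a).eventually_mem hz).mono fun z hzU => hf1.aestronglyMeasurable.mul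
      (((contOn_kernel (b := b) hzU)).aestronglyMeasurable measurableSet_Icc)
  · exact integrable_kernel hf1 hν hz
  · exact hf1.aestronglyMeasurable.mul
      ((aestronglyMeasurable_const.mul
        ((contOn_kernel (b := b) hz).aestronglyMeasurable measurableSet_Icc)))
  · filter_upwards [ae_restrict_mem measurableSet_Icc] with t ht
    intro z hzz
    have hne := ne_zero_of_lb (by linarith : (0:ℝ) < m / 2) (hlow z hzz t ht)
    rw [norm_mul, norm_mul]
    have hnk : ‖((t : ℂ) - z) ^ (-(ν : ℂ) - 1)‖ = ‖(t : ℂ) - z‖ ^ (-(ν + 1)) := by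
      rw [hexp, norm_kernel hne]
    rw [hnk]
    have hb1 : ‖(t : ℂ) - z‖ ^ (-(ν + 1)) ≤ (m / 2) ^ (-(ν + 1)) :=
      Real.rpow_le_rpow_of_nonpos (by linarith) (hlow z hzz t ht) (by linarith)
    have hν' : ‖(ν : ℂ)‖ = ν := by
      rw [Complex.norm_real, Real.norm_eq_abs, _root_.abs_of_nonneg hν]
    rw [hν']
    have h5 : (0:ℝ) ≤ ‖f t‖ := norm_nonneg _
    calc ‖f t‖ * (ν * ‖(t : ℂ) - z‖ ^ (-(ν + 1)))
        ≤ ‖f t‖ * (ν * (m / 2) ^ (-(ν + 1))) := by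
          apply mul_le_mul_of_nonneg_left _ h5
          exact mul_le_mul_of_nonneg_left hb1 hν
      _ = ν * (m / 2) ^ (-(ν + 1)) * ‖f t‖ := by ring
  · exact (hf1.norm).const_mul _
  · filter_upwards [ae_restrict_mem measurableSet_Icc] with t ht
    intro z hzz
    have hd : HasDerivAt (fun z : ℂ => (t : ℂ) - z) (-1) z := by
      simpa using (hasDerivAt_id z).const_sub (t : ℂ)
    have hcp := hd.cpow_const (c := -(ν : ℂ)) (mem_slit (hballU z hzz) ht)
    have := hcp.const_mul (f t)
    exact this.congr_deriv (by ring)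

end Stmt2Aux

open Set Filter

theorem stmt2 (a b μ ε₀ : ℝ) (hab : a ≤ b) (h0 : (0:ℝ) ∉ Set.Icc a b)
    (hμ : 0 < μ) (hε₀ : 0 < ε₀) (f : ℝ → ℂ)
    (hf : MemLp f 2 (volume.restrict (Set.Icc a b)))
    (hint : ∀ ε ∈ Set.Ioo (0:ℝ) ε₀,
      ∫ t in Set.Icc a b, f t * ((t : ℂ) - (ε : ℂ) * Complex.I) ^ (-(μ : ℂ)) = 0) :
    ∀ᵐ t ∂(volume.restrict (Set.Icc a b)), f t = 0 := by
  classical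
  haveI : IsFiniteMeasure (volume.restrict (Set.Icc a b)) :=
    ⟨by rw [Measure.restrict_apply_univ]; exact measure_Icc_lt_top⟩
  have hf1 : Integrable f (volume.restrict (Set.Icc a b)) :=
    memLp_one_iff_integrable.mp (hf.mono_exponent (by norm_num))
  -- Step 1 & 2: all shifted moments of the analytic family vanish on Udom a
  have hK0 : ∀ n : ℕ, ∀ z ∈ Stmt2Aux.Udom a, Stmt2Aux.Kf f a b (μ + n) z = 0 := by
    intro n
    induction n with
    | zero =>
      have hdiff : DifferentiableOn ℂ (Stmt2Aux.Kf f a b μ) (Stmt2Aux.Udom a) := fun z hz =>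
        (Stmt2Aux.hasDerivAt_Kf hf1 hμ.le hz).differentiableAt.differentiableWithinAt
      have hanalytic := hdiff.analyticOnNhd (Stmt2Aux.isOpen_Udom a)
      set z₀ : ℂ := ((ε₀ / 2 : ℝ) : ℂ) * Complex.I with hz₀def
      have hz₀ : z₀ ∈ Stmt2Aux.Udom a := by
        left
        simp [hz₀def]
        linarith
      set u : ℕ → ℂ := fun n => ((ε₀ / 2 + ε₀ / 4 / (n + 1) : ℝ) : ℂ) * Complex.I with hudef
      have hεmem : ∀ n : ℕ, (ε₀ / 2 + ε₀ / 4 / ((n : ℝ) + 1)) ∈ Set.Ioo (0:ℝ) ε₀ := by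
        intro n
        have hn1 : (1:ℝ) ≤ (n : ℝ) + 1 := by
          have := Nat.cast_nonneg (α := ℝ) n; linarith
        have h1 : ε₀ / 4 / ((n:ℝ) + 1) ≤ ε₀ / 4 :=
          (div_le_self (by positivity) hn1)
        constructor
        · positivity
        · linarith
      have hu0 : ∀ n : ℕ, Stmt2Aux.Kf f a b μ (u n) = 0 := fun n => by
        simpa [Stmt2Aux.Kf, hudef] using hint _ (hεmem n)
      have htend : Tendsto u atTop (nhdsWithin z₀ {z₀}ᶜ) := by
        rw [tendsto_nhdsWithin_iff]
        constructor
        · have h3 : Tendsto (fun n : ℕ => ε₀ / 4 / ((n:ℝ) + 1)) atTop (nhds 0) := by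
            have h2 := (tendsto_const_div_atTop_nhds_zero_nat (ε₀ / 4)).comp
              (tendsto_add_atTop_nat 1)
            apply h2.congr
            intro n
            show ε₀ / 4 / (((n + 1 : ℕ)) : ℝ) = ε₀ / 4 / ((n:ℝ) + 1)
            push_cast
            ring
          have h1 : Tendsto (fun n : ℕ => ε₀ / 2 + ε₀ / 4 / ((n:ℝ) + 1)) atTop
              (nhds (ε₀ / 2)) := by
            simpa using h3.const_add (ε₀ / 2)
          have h4 : Continuous fun x : ℝ => ((x : ℂ) * Complex.I) :=
            Complex.continuous_ofReal.mul continuous_const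
          exact (h4.tendsto (ε₀ / 2)).comp h1
        · refine Eventually.of_forall fun n => ?_
          simp only [hudef, hz₀def, Set.mem_compl_iff, Set.mem_singleton_iff]
          intro h
          have h5 := mul_right_cancel₀ Complex.I_ne_zero h
          rw [Complex.ofReal_inj] at h5
          have hp : 0 < ε₀ / 4 / ((n:ℝ) + 1) := by positivity
          linarith
      have heq := hanalytic.eqOn_zero_of_preconnected_of_frequently_eq_zero
        (Stmt2Aux.preconnected_Udom a) hz₀
        (htend.frequently (Frequently.of_forall hu0))
      intro z hz
      have := heq hz
      simpa using this
    | succ n ih =>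
      intro z hz
      have hν : (0:ℝ) ≤ μ + n := by positivity
      have hd := Stmt2Aux.hasDerivAt_Kf hf1 hν hz
      have hzero : HasDerivAt (Stmt2Aux.Kf f a b (μ + n)) 0 z := by
        have hev : Stmt2Aux.Kf f a b (μ + n) =ᶠ[nhds z] (fun _ => 0) :=
          Filter.eventuallyEq_of_mem ((Stmt2Aux.isOpen_Udom a).mem_nhds hz)
            (fun w hw => ih w hw)
        exact (hasDerivAt_const z (0:ℂ)).congr_of_eventuallyEq hev
      have huniq := hzero.unique hd
      have hne : ((μ + n : ℝ) : ℂ) ≠ 0 := by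
        rw [Ne, Complex.ofReal_eq_zero]
        positivity
      have h5 : Stmt2Aux.Kf f a b (μ + n + 1) z = 0 :=
        (mul_eq_zero.mp huniq.symm).resolve_left hne
      have hcast : (μ + ((n : ℕ) + 1 : ℕ) : ℝ) = μ + (n : ℝ) + 1 := by push_cast; ring
      rw [hcast]
      exact h5
  -- Step 3: moments at the real point a - 1
  have hx₁ : ((a - 1 : ℝ) : ℂ) ∈ Stmt2Aux.Udom a := by
    right
    simp
  set w : ℝ → ℂ := fun t => ((t : ℂ) - ((a - 1 : ℝ) : ℂ)) ^ (-(μ : ℂ)) with hwdef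
  set g0 : ℝ → ℂ := fun t => f t * w t with hg0def
  have hg0int : Integrable g0 (volume.restrict (Set.Icc a b)) :=
    Stmt2Aux.integrable_kernel hf1 hμ.le hx₁
  have hginti : ∀ i : ℕ, Integrable
      (fun t : ℝ => ((((t - (a - 1))⁻¹ : ℝ)) : ℂ) ^ i * g0 t)
      (volume.restrict (Set.Icc a b)) := by
    intro i
    apply hg0int.bdd_mul
      (c := 1)
    · exact ((Complex.measurable_ofReal.comp
        ((measurable_id.sub_const (a - 1)).inv)).pow_const i).aestronglyMeasurable
    · filter_upwards [ae_restrict_mem measurableSet_Icc] with t ht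
      have h1 : (1:ℝ) ≤ t - (a - 1) := by linarith [ht.1]
      have h2 : (t - (a - 1))⁻¹ ≤ 1 := by
        rw [inv_le_one_iff₀]; right; exact h1
      have h3 : 0 ≤ (t - (a - 1))⁻¹ := by positivity
      rw [norm_pow, Complex.norm_real, Real.norm_eq_abs, _root_.abs_of_nonneg h3]
      exact pow_le_one₀ h3 h2
  have hmom : ∀ n : ℕ, ∫ t in Set.Icc a b,
      ((((t - (a - 1))⁻¹ : ℝ)) : ℂ) ^ n * g0 t = 0 := by
    intro n
    have h1 := hK0 n _ hx₁
    rw [Stmt2Aux.Kf] at h1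
    rw [← h1]
    apply setIntegral_congr_fun measurableSet_Icc
    intro t ht
    have hpos : (0:ℝ) < t - (a - 1) := by linarith [ht.1]
    have hbase : ((t : ℂ) - ((a - 1 : ℝ) : ℂ)) = (((t - (a - 1) : ℝ)) : ℂ) := by push_cast; ring
    have hne0 : (((t - (a - 1) : ℝ)) : ℂ) ≠ 0 := by
      rw [Ne, Complex.ofReal_eq_zero]; linarith
    have hsplitexp : -((μ + (n : ℕ) : ℝ) : ℂ) = (-(μ : ℂ)) + (-((n : ℕ) : ℂ)) := by
      push_cast; ring
    have hsplit : ((t : ℂ) - ((a - 1 : ℝ) : ℂ)) ^ (-((μ + (n : ℕ) : ℝ) : ℂ))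
        = w t * ((((t - (a - 1))⁻¹ : ℝ)) : ℂ) ^ n := by
      rw [hwdef]
      simp only [hbase]
      rw [hsplitexp, Complex.cpow_add _ _ hne0]
      congr 1
      rw [Complex.cpow_neg, Complex.cpow_natCast, ← inv_pow, ← Complex.ofReal_inv]
    simp only [hg0def]
    rw [hsplit]
    ring
  -- Step 4: test against smooth compactly supported functions
  have hg0zero : ∀ᵐ t ∂(volume.restrict (Set.Icc a b)), g0 t = 0 := by
    apply ae_eq_zero_of_integral_contDiff_smul_eq_zero
      hg0int.locallyIntegrable
    intro g hgsmooth hgsupp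
    set X := ∫ t in Set.Icc a b, g t • g0 t with hXdef
    set B := ∫ t in Set.Icc a b, ‖g0 t‖ with hBdef
    have hBnn : 0 ≤ B := integral_nonneg fun t => norm_nonneg _
    obtain ⟨C, hC⟩ := hgsmooth.continuous.bounded_above_of_compact_support hgsupp
    have hgint : Integrable (fun t => g t • g0 t) (volume.restrict (Set.Icc a b)) := by
      have := hg0int.bdd_mul (f := fun t => ((g t : ℝ) : ℂ)) (c := C)
        ((Complex.continuous_ofReal.comp hgsmooth.continuous).aestronglyMeasurable)
        (Eventually.of_forall fun t => by simpa using hC t)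
      apply this.congr
      filter_upwards with t
      rw [Complex.real_smul]
    have key : ∀ ε' > (0:ℝ), ‖X‖ ≤ ε' * B := by
      intro ε' hε'
      set c : ℝ := (b - (a - 1))⁻¹ with hcdef
      have hba : (1:ℝ) ≤ b - (a - 1) := by linarith
      have hc : 0 < c := by rw [hcdef]; positivity
      have hG : ContinuousOn (fun s : ℝ => g (a - 1 + s⁻¹)) (Set.Icc c 1) := by
        apply hgsmooth.continuous.comp_continuousOn
        apply ContinuousOn.add continuousOn_const
        exact ContinuousOn.inv₀ continuousOn_id fun s hs => ne_of_gt (lt_of_lt_of_le hc hs.1)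
      obtain ⟨p, hp⟩ := exists_polynomial_near_of_continuousOn c 1 _ hG ε' hε'
      set q : ℝ → ℝ := fun t => p.eval ((t - (a - 1))⁻¹) with hqdef
      have hmemJ : ∀ t ∈ Set.Icc a b, (t - (a - 1))⁻¹ ∈ Set.Icc c 1 := by
        intro t ht
        have h1 : (1:ℝ) ≤ t - (a - 1) := by linarith [ht.1]
        have h2 : t - (a - 1) ≤ b - (a - 1) := by linarith [ht.2]
        constructor
        · exact inv_anti₀ (by linarith) h2
        · rw [inv_le_one_iff₀]; right; exact h1
      have hq_near : ∀ t ∈ Set.Icc a b, |g t - q t| ≤ ε' := by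
        intro t ht
        have h1 : (1:ℝ) ≤ t - (a - 1) := by linarith [ht.1]
        have h2 := hp _ (hmemJ t ht)
        have h3 : g (a - 1 + ((t - (a - 1))⁻¹)⁻¹) = g t := by
          rw [inv_inv]; congr 1; ring
        rw [h3] at h2
        rw [abs_sub_comm]
        exact le_of_lt h2
      -- integrability of q • g0
      have hqint : Integrable (fun t => (q t : ℂ) * g0 t) (volume.restrict (Set.Icc a b)) := by
        have heval : (fun t : ℝ => (q t : ℂ) * g0 t) = fun t : ℝ =>
            ∑ i ∈ Finset.range (p.natDegree + 1),
              ((p.coeff i : ℂ) * (((((t - (a - 1))⁻¹ : ℝ)) : ℂ) ^ i * g0 t)) := by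
          funext t
          simp only [hqdef]
          rw [Polynomial.eval_eq_sum_range]
          push_cast
          rw [Finset.sum_mul]
          congr 1
          funext i
          ring
        rw [heval]
        exact integrable_finset_sum _ fun i _ => (hginti i).const_mul _
      have hqzero : ∫ t in Set.Icc a b, (q t : ℂ) * g0 t = 0 := by
        have heval : (fun t : ℝ => (q t : ℂ) * g0 t) = fun t : ℝ =>
            ∑ i ∈ Finset.range (p.natDegree + 1),
              ((p.coeff i : ℂ) * (((((t - (a - 1))⁻¹ : ℝ)) : ℂ) ^ i * g0 t)) := by
          funext t
          simp only [hqdef]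
          rw [Polynomial.eval_eq_sum_range]
          push_cast
          rw [Finset.sum_mul]
          congr 1
          funext i
          ring
        rw [heval, integral_finset_sum _ fun i _ => (hginti i).const_mul _]
        apply Finset.sum_eq_zero
        intro i _
        rw [integral_const_mul, hmom i, mul_zero]
      have h1 : (fun t : ℝ => (g t - q t) • g0 t)
          = fun t : ℝ => g t • g0 t - (q t : ℂ) * g0 t := by
        funext t
        simp only [sub_smul, Complex.real_smul]
      have hsplit : (∫ t in Set.Icc a b, (g t - q t) • g0 t) = X := by
        rw [h1, integral_sub hgint hqint, hqzero, sub_zero, hXdef]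
      rw [← hsplit]
      have hbound := norm_integral_le_of_norm_le
        (μ := volume.restrict (Set.Icc a b)) (f := fun t => (g t - q t) • g0 t)
        (hg0int.norm.const_mul ε') ?_
      · calc ‖∫ t in Set.Icc a b, (g t - q t) • g0 t‖
            ≤ ∫ t in Set.Icc a b, ε' * ‖g0 t‖ := hbound
          _ = ε' * B := by rw [hBdef, integral_const_mul]
      · filter_upwards [ae_restrict_mem measurableSet_Icc] with t ht
        rw [norm_smul, Real.norm_eq_abs]
        exact mul_le_mul_of_nonneg_right (hq_near t ht) (norm_nonneg _)
    have hX0 : ‖X‖ = 0 := by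
      by_contra hcon
      have hpos : 0 < ‖X‖ := lt_of_le_of_ne (norm_nonneg _) (Ne.symm hcon)
      have h6 := key (‖X‖ / (2 * (B + 1))) (div_pos hpos (by linarith))
      have h7 : ‖X‖ / (2 * (B + 1)) * B < ‖X‖ := by
        rw [div_mul_eq_mul_div, div_lt_iff₀ (by linarith)]
        nlinarith
      linarith
    exact norm_eq_zero.mp hX0
  -- conclude
  filter_upwards [hg0zero, ae_restrict_mem measurableSet_Icc] with t h1 h2
  have hwne : w t ≠ 0 := by
    rw [hwdef]
    intro hc
    rw [Complex.cpow_eq_zero_iff] at hc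
    have h3 : ((t : ℂ) - ((a - 1 : ℝ) : ℂ)) = (((t - (a - 1) : ℝ)) : ℂ) := by push_cast; ring
    rw [h3, Complex.ofReal_eq_zero] at hc
    have := hc.1
    linarith [h2.1]
  have h4 : f t * w t = 0 := h1
  exact (mul_eq_zero.mp h4).resolve_right hwne
end

section
/- Let Ω ⊂ ℝ^{1+n} be a bounded open set, let u : ℝ^{1+n} → ℝ be harmonic on ℝ^{1+n}, and let v = (v₀,…,v_n) be a C¹ compactly supported vector field with support contained in Ω. Then Σ_{j,k} ∫_Ω (∂ⱼv_k + ∂_k vⱼ − δ_{jk} div v)(x) ∂ⱼu(x) ∂_k u(x) dx = 0. -/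
open MeasureTheory

/-- Partial derivative in the `j`-th coordinate direction. -/
noncomputable def pd {m : ℕ} {E : Type*} [NormedAddCommGroup E] [NormedSpace ℝ E]
    (j : Fin m) (f : (Fin m → ℝ) → E) (x : Fin m → ℝ) : E :=
  fderiv ℝ f x (Pi.single j 1)

section pdlemmas
variable {m : ℕ} {f g : (Fin m → ℝ) → ℝ} {x : Fin m → ℝ} {j : Fin m}

lemma pd_mul (hf : DifferentiableAt ℝ f x) (hg : DifferentiableAt ℝ g x) :
    pd j (fun y => f y * g y) x = pd j f x * g x + f x * pd j g x := by
  simp only [pd, fderiv_fun_mul hf hg]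
  simp only [ContinuousLinearMap.add_apply, ContinuousLinearMap.smul_apply, smul_eq_mul]
  ring

lemma pd_sub (hf : DifferentiableAt ℝ f x) (hg : DifferentiableAt ℝ g x) :
    pd j (fun y => f y - g y) x = pd j f x - pd j g x := by
  simp [pd, fderiv_fun_sub hf hg]

lemma pd_const_mul (c : ℝ) (hf : DifferentiableAt ℝ f x) :
    pd j (fun y => c * f y) x = c * pd j f x := by
  simp [pd, fderiv_const_mul hf]

lemma pd_sum {ι : Type*} {s : Finset ι} {F : ι → (Fin m → ℝ) → ℝ}
    (h : ∀ i ∈ s, DifferentiableAt ℝ (F i) x) :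
    pd j (fun y => ∑ i ∈ s, F i y) x = ∑ i ∈ s, pd j (F i) x := by
  simp [pd, fderiv_fun_sum h]

end pdlemmas

lemma pd_comm {m : ℕ} {u : (Fin m → ℝ) → ℝ} (hu : ContDiff ℝ 2 u) (j k : Fin m)
    (x : Fin m → ℝ) : pd j (pd k u) x = pd k (pd j u) x := by
  have hdu : Differentiable ℝ u := hu.differentiable two_ne_zero
  have hd1 : Differentiable ℝ (fderiv ℝ u) :=
    (hu.fderiv_right (m := 1) le_rfl).differentiable one_ne_zero
  have key : ∀ i l : Fin m, pd i (pd l u) x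
      = fderiv ℝ (fderiv ℝ u) x (Pi.single i 1) (Pi.single l 1) := by
    intro i l
    show fderiv ℝ (fun y => (fderiv ℝ u y) ((fun _ => (Pi.single l 1 : Fin m → ℝ)) y)) x
      (Pi.single i 1) = _
    rw [fderiv_clm_apply (c := fderiv ℝ u) (u := fun _ => (Pi.single l 1 : Fin m → ℝ)) (hd1 x)
      (differentiableAt_const _)]
    simp
  rw [key, key]
  exact second_derivative_symmetric (fun y => (hdu y).hasFDerivAt) (hd1 x).hasFDerivAt _ _

lemma integral_pd_eq_zero {m : ℕ} (f : (Fin (m + 1) → ℝ) → ℝ) (hf : ContDiff ℝ 1 f)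
    (hs : HasCompactSupport f) (k : Fin (m + 1)) : ∫ x, pd k f x = 0 := by
  have h1 : Integrable f := hf.continuous.integrable_of_hasCompactSupport hs
  have hc : Continuous (fun x => fderiv ℝ f x (Pi.single k 1)) :=
    ((hf.fderiv_right (m := 0) le_rfl).continuous).clm_apply continuous_const
  have h2 : Integrable (fun x => fderiv ℝ f x (Pi.single k 1)) :=
    hc.integrable_of_hasCompactSupport (hs.fderiv_apply (𝕜 := ℝ) (Pi.single k 1))
  have := integral_mul_fderiv_eq_neg_fderiv_mul_of_integrable (μ := volume)
    (f := f) (g := fun _ => (1:ℝ)) (v := Pi.single k 1)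
    (by simpa using h2) (by simp) (by simpa using h1)
    (fun x _ => hf.differentiable one_ne_zero x) (fun x _ => differentiableAt_const _)
  simp only [fderiv_fun_const] at this
  simp only [pd]
  simpa using this.symm

theorem stmt9 (n : ℕ) (Ω : Set (Fin (n + 1) → ℝ)) (hΩo : IsOpen Ω)
    (hΩb : Bornology.IsBounded Ω)
    (u : (Fin (n + 1) → ℝ) → ℝ) (hu : ContDiff ℝ 2 u)
    (hharm : ∀ x, ∑ j, pd j (pd j u) x = 0)
    (v : (Fin (n + 1) → ℝ) → Fin (n + 1) → ℝ) (hv : ContDiff ℝ 1 v)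
    (hvs : HasCompactSupport v) (hsupp : tsupport v ⊆ Ω) :
    ∑ j, ∑ k, ∫ x in Ω,
      (pd j (fun y => v y k) x + pd k (fun y => v y j) x
          - (if j = k then ∑ l, pd l (fun y => v y l) x else 0))
        * pd j u x * pd k u x = 0 := by
  classical
  -- basic regularity facts
  have hu1 : ∀ j : Fin (n+1), ContDiff ℝ 1 (pd j u) := fun j =>
    (hu.fderiv_right (m := 1) le_rfl).clm_apply contDiff_const
  have hv1 : ∀ k : Fin (n+1), ContDiff ℝ 1 (fun x => v x k) := fun k => (contDiff_pi.mp hv) k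
  have hdu1 : ∀ (j : Fin (n+1)) x, DifferentiableAt ℝ (pd j u) x := fun j x =>
    ((hu1 j).differentiable one_ne_zero) x
  have hdv : ∀ (k : Fin (n+1)) x, DifferentiableAt ℝ (fun y => v y k) x := fun k x =>
    ((hv1 k).differentiable one_ne_zero) x
  have hcv : ∀ j k : Fin (n+1), Continuous (fun x => pd j (fun y => v y k) x) := fun j k =>
    (((hv1 k).fderiv_right (m := 0) le_rfl).continuous).clm_apply continuous_const
  have hcu2 : ∀ j k : Fin (n+1), Continuous (fun x => pd k (pd j u) x) := fun j k =>
    (((hu1 j).fderiv_right (m := 0) le_rfl).continuous).clm_apply continuous_const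
  -- vanishing of v-derivatives off the support of v
  have hvanish : ∀ (j k : Fin (n+1)) x, x ∉ tsupport v → pd j (fun y => v y k) x = 0 := by
    intro j k x hx
    have hev : (fun y => v y k) =ᶠ[nhds x] (fun _ => (0:ℝ)) := by
      filter_upwards [(isClosed_tsupport v).isOpen_compl.mem_nhds hx] with y hy
      rw [image_eq_zero_of_notMem_tsupport hy]
      rfl
    simp [pd, hev.fderiv_eq]
  -- the vector field F
  set F : Fin (n+1) → (Fin (n+1) → ℝ) → ℝ := fun k y =>
    2 * (∑ j, v y j * pd j u y) * pd k u y - v y k * ∑ j, pd j u y * pd j u y with hFdef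
  have hF1 : ∀ k, ContDiff ℝ 1 (F k) := by
    intro k
    apply ContDiff.sub
    · exact ((contDiff_const.mul (ContDiff.sum fun j _ => (hv1 j).mul (hu1 j))).mul (hu1 k))
    · exact (hv1 k).mul (ContDiff.sum fun j _ => (hu1 j).mul (hu1 j))
  have hFs : ∀ k, HasCompactSupport (F k) := by
    intro k
    apply HasCompactSupport.intro hvs
    intro x hx
    have h0 : v x = 0 := image_eq_zero_of_notMem_tsupport hx
    simp [hFdef, h0, Pi.zero_apply]
  -- derivative of F
  have hDF : ∀ (k : Fin (n+1)) x, pd k (F k) x =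
      (2 * ∑ j, (pd k (fun y => v y j) x * pd j u x + v x j * pd k (pd j u) x)) * pd k u x
      + (2 * ∑ j, v x j * pd j u x) * pd k (pd k u) x
      - (pd k (fun y => v y k) x * (∑ j, pd j u x * pd j u x)
         + v x k * ∑ j, (pd k (pd j u) x * pd j u x + pd j u x * pd k (pd j u) x)) := by
    intro k x
    have dS : DifferentiableAt ℝ (fun y => ∑ j, v y j * pd j u y) x :=
      DifferentiableAt.fun_sum (fun j _ => (hdv j x).mul (hdu1 j x))
    have dB : DifferentiableAt ℝ (fun y => ∑ j, pd j u y * pd j u y) x :=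
      DifferentiableAt.fun_sum (fun j _ => (hdu1 j x).mul (hdu1 j x))
    have d2S : DifferentiableAt ℝ (fun y => 2 * ∑ j, v y j * pd j u y) x := dS.const_mul 2
    simp only [hFdef]
    rw [pd_sub (f := fun y => 2 * (∑ j, v y j * pd j u y) * pd k u y)
        (g := fun y => v y k * ∑ j, pd j u y * pd j u y) (d2S.mul (hdu1 k x)) ((hdv k x).mul dB)]
    rw [pd_mul (f := fun y => 2 * ∑ j, v y j * pd j u y) (g := fun y => pd k u y)
        d2S (hdu1 k x)]
    rw [pd_mul (f := fun y => v y k) (g := fun y => ∑ j, pd j u y * pd j u y) (hdv k x) dB]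
    rw [pd_const_mul (f := fun y => ∑ j, v y j * pd j u y) 2 dS]
    rw [pd_sum (F := fun j y => v y j * pd j u y) (fun j _ => (hdv j x).mul (hdu1 j x))]
    rw [pd_sum (F := fun j y => pd j u y * pd j u y) (fun j _ => (hdu1 j x).mul (hdu1 j x))]
    rw [Finset.sum_congr rfl (fun j _ =>
      pd_mul (f := fun y => v y j) (g := fun y => pd j u y) (hdv j x) (hdu1 j x))]
    rw [Finset.sum_congr rfl (fun j _ =>
      pd_mul (f := fun y => pd j u y) (g := fun y => pd j u y) (hdu1 j x) (hdu1 j x))]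
  have hsum : ∀ x, (∑ k, pd k (F k) x)
      = ∑ j, ∑ k, (pd j (fun y => v y k) x + pd k (fun y => v y j) x
          - (if j = k then ∑ l, pd l (fun y => v y l) x else 0)) * pd j u x * pd k u x := by
    intro x
    rw [Finset.sum_congr rfl fun k _ => hDF k x]
    have split : ∀ k : Fin (n+1),
        (2 * ∑ j, (pd k (fun y => v y j) x * pd j u x + v x j * pd k (pd j u) x)) * pd k u x
        + (2 * ∑ j, v x j * pd j u x) * pd k (pd k u) x
        - (pd k (fun y => v y k) x * (∑ j, pd j u x * pd j u x)
           + v x k * ∑ j, (pd k (pd j u) x * pd j u x + pd j u x * pd k (pd j u) x))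
        = (∑ j, (2 * pd k (fun y => v y j) x * pd j u x * pd k u x
                 - pd k (fun y => v y k) x * (pd j u x * pd j u x)))
          + (∑ j, (2 * v x j * pd k (pd j u) x * pd k u x
                 - v x k * (2 * pd j u x * pd k (pd j u) x)))
          + (∑ j, 2 * v x j * pd j u x * pd k (pd k u) x) := by
      intro k
      simp only [Finset.mul_sum, Finset.sum_mul, ← Finset.sum_add_distrib,
        ← Finset.sum_sub_distrib]
      exact Finset.sum_congr rfl fun j _ => by ring
    rw [Finset.sum_congr rfl fun k _ => split k]
    rw [Finset.sum_add_distrib, Finset.sum_add_distrib]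
    have h3 : (∑ k, ∑ j : Fin (n+1), 2 * v x j * pd j u x * pd k (pd k u) x) = 0 := by
      rw [Finset.sum_comm]
      refine Finset.sum_eq_zero fun j _ => ?_
      rw [← Finset.mul_sum, hharm x, mul_zero]
    have h2 : (∑ k, ∑ j : Fin (n+1), (2 * v x j * pd k (pd j u) x * pd k u x
                 - v x k * (2 * pd j u x * pd k (pd j u) x))) = 0 := by
      simp only [Finset.sum_sub_distrib]
      rw [sub_eq_zero, Finset.sum_comm]
      refine Finset.sum_congr rfl fun k _ => Finset.sum_congr rfl fun j _ => ?_
      rw [pd_comm hu j k x]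
      ring
    rw [h2, h3, add_zero, add_zero]
    -- first piece equals the target
    have hite : ∀ j : Fin (n+1),
        (∑ k, (if j = k then ∑ l, pd l (fun y => v y l) x else 0) * pd j u x * pd k u x)
        = ∑ k, pd k (fun y => v y k) x * (pd j u x * pd j u x) := by
      intro j
      simp only [ite_mul, zero_mul]
      rw [Finset.sum_ite_eq]
      simp only [Finset.mem_univ, if_true]
      rw [Finset.sum_mul, Finset.sum_mul]
      exact Finset.sum_congr rfl fun l _ => by ring
    have hexp : (∑ j, ∑ k, (pd j (fun y => v y k) x + pd k (fun y => v y j) x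
          - (if j = k then ∑ l, pd l (fun y => v y l) x else 0)) * pd j u x * pd k u x)
        = (∑ j, ∑ k, pd j (fun y => v y k) x * pd j u x * pd k u x)
          + (∑ j, ∑ k, pd k (fun y => v y j) x * pd j u x * pd k u x)
          - (∑ j, ∑ k, pd k (fun y => v y k) x * (pd j u x * pd j u x)) := by
      simp only [sub_mul, add_mul, Finset.sum_sub_distrib, Finset.sum_add_distrib]
      congr 1
      exact Finset.sum_congr rfl fun j _ => hite j
    rw [hexp]
    have hV1 : (∑ j, ∑ k : Fin (n+1), pd j (fun y => v y k) x * pd j u x * pd k u x)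
        = ∑ k, ∑ j : Fin (n+1), pd k (fun y => v y j) x * pd k u x * pd j u x := rfl
    have hV2 : (∑ j, ∑ k : Fin (n+1), pd k (fun y => v y j) x * pd j u x * pd k u x)
        = ∑ k, ∑ j : Fin (n+1), pd k (fun y => v y j) x * pd j u x * pd k u x := by
      rw [Finset.sum_comm]
    have hV3 : (∑ j, ∑ k : Fin (n+1), pd k (fun y => v y k) x * (pd j u x * pd j u x))
        = ∑ k, ∑ j : Fin (n+1), pd k (fun y => v y k) x * (pd j u x * pd j u x) := by
      rw [Finset.sum_comm]
    rw [hV1, hV2, hV3]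
    simp only [← Finset.sum_add_distrib, ← Finset.sum_sub_distrib]
    exact (Finset.sum_congr rfl fun k _ => Finset.sum_congr rfl fun j _ => by ring).symm
  -- continuity, support and integrability of the integrands
  have hgc : ∀ j k : Fin (n+1), Continuous (fun x =>
      (pd j (fun y => v y k) x + pd k (fun y => v y j) x
        - (if j = k then ∑ l, pd l (fun y => v y l) x else 0)) * pd j u x * pd k u x) := by
    intro j k
    refine Continuous.mul (Continuous.mul (Continuous.sub ((hcv j k).add (hcv k j)) ?_)
      (hu1 j).continuous) (hu1 k).continuous
    by_cases h : j = k
    · simp only [h, if_true]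
      exact continuous_finset_sum _ fun l _ => hcv l l
    · simp only [h, if_false]
      exact continuous_const
  have hgz : ∀ (j k : Fin (n+1)) x, x ∉ tsupport v →
      (pd j (fun y => v y k) x + pd k (fun y => v y j) x
        - (if j = k then ∑ l, pd l (fun y => v y l) x else 0)) * pd j u x * pd k u x = 0 := by
    intro j k x hx
    have h0 : ∀ a b : Fin (n+1), pd a (fun y => v y b) x = 0 := fun a b => hvanish a b x hx
    simp [h0]
  have hgs : ∀ j k : Fin (n+1), HasCompactSupport (fun x =>
      (pd j (fun y => v y k) x + pd k (fun y => v y j) x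
        - (if j = k then ∑ l, pd l (fun y => v y l) x else 0)) * pd j u x * pd k u x) :=
    fun j k => HasCompactSupport.intro hvs (fun x hx => hgz j k x hx)
  have hgi : ∀ j k : Fin (n+1), Integrable (fun x =>
      (pd j (fun y => v y k) x + pd k (fun y => v y j) x
        - (if j = k then ∑ l, pd l (fun y => v y l) x else 0)) * pd j u x * pd k u x) :=
    fun j k => (hgc j k).integrable_of_hasCompactSupport (hgs j k)
  -- replace the integral over Ω by the integral over the whole space
  have hset : ∀ j k : Fin (n+1), (∫ x in Ω,
      (pd j (fun y => v y k) x + pd k (fun y => v y j) x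
        - (if j = k then ∑ l, pd l (fun y => v y l) x else 0)) * pd j u x * pd k u x)
      = ∫ x, (pd j (fun y => v y k) x + pd k (fun y => v y j) x
        - (if j = k then ∑ l, pd l (fun y => v y l) x else 0)) * pd j u x * pd k u x :=
    fun j k => setIntegral_eq_integral_of_forall_compl_eq_zero
      (fun x hx => hgz j k x (fun h => hx (hsupp h)))
  rw [Finset.sum_congr rfl fun j _ => Finset.sum_congr rfl fun k _ => hset j k]
  rw [Finset.sum_congr rfl fun j (_ : j ∈ Finset.univ) =>
    (integral_finset_sum Finset.univ fun k _ => hgi j k).symm]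
  rw [(integral_finset_sum Finset.univ fun j _ =>
    integrable_finset_sum Finset.univ fun k _ => hgi j k).symm]
  have : (∫ x, ∑ j, ∑ k, (pd j (fun y => v y k) x + pd k (fun y => v y j) x
        - (if j = k then ∑ l, pd l (fun y => v y l) x else 0)) * pd j u x * pd k u x)
      = ∫ x, ∑ k, pd k (F k) x := by
    refine integral_congr_ae (Filter.Eventually.of_forall fun x => ?_)
    exact (hsum x).symm
  rw [this]
  have hFc : ∀ k, Continuous (fun x => pd k (F k) x) := fun k =>
    (((hF1 k).fderiv_right (m := 0) le_rfl).continuous).clm_apply continuous_const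
  have hFi : ∀ k, Integrable (fun x => pd k (F k) x) := fun k =>
    (hFc k).integrable_of_hasCompactSupport ((hFs k).fderiv_apply (𝕜 := ℝ) (Pi.single k 1))
  rw [integral_finset_sum Finset.univ fun k _ => hFi k]
  exact Finset.sum_eq_zero fun k _ => integral_pd_eq_zero (F k) (hF1 k) (hFs k) k
end

section
/- Let Ω ⊂ ℝ^{1+n} be a bounded open set and let a = (a_{jk}) be a matrix field with compactly supported C¹ entries on ℝ^{1+n} such that a_{jk} = −a_{kj} and Σⱼ ∂ⱼa_{jk} = 0 for all k. Then for all functions u₁, u₂ harmonic on ℝ^{1+n}, Σ_{j,k} ∫ a_{jk}(x) ∂ⱼu₁(x) ∂_k u₂(x) dx = 0. -/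
open MeasureTheory

/-- A function is harmonic on all of `ℝ^m`. -/
def IsHarm {m : ℕ} (u : (Fin m → ℝ) → ℝ) : Prop :=
  ContDiff ℝ 2 u ∧ ∀ x, ∑ j, pd j (pd j u) x = 0

open Set in
/-- The integral over `ℝ^{n+1}` of a partial derivative of a compactly supported `C¹`
function vanishes. -/
lemma aux_integral_pd_eq_zero {n : ℕ} (f : (Fin (n + 1) → ℝ) → ℝ)
    (hf : ContDiff ℝ 1 f) (hs : HasCompactSupport f) (k : Fin (n + 1)) :
    ∫ x, pd k f x = 0 := by
  obtain ⟨R₀, hR₀⟩ := hs.isCompact.isBounded.subset_closedBall 0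
  set R : ℝ := max R₀ 0 with hRdef
  have hR : tsupport f ⊆ Metric.closedBall 0 R :=
    hR₀.trans (Metric.closedBall_subset_closedBall (le_max_left _ _))
  set A : Fin (n + 1) → ℝ := fun _ => -(R + 1) with hA
  set B : Fin (n + 1) → ℝ := fun _ => (R + 1) with hB
  have hRnn : (0 : ℝ) ≤ R := le_max_right _ _
  have hle : A ≤ B := fun i => by simp only [hA, hB]; linarith
  have hvanish : ∀ x : Fin (n + 1) → ℝ, R < ‖x‖ → f x = 0 := by
    intro x hx
    apply image_eq_zero_of_notMem_tsupport
    intro hmem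
    have := hR hmem
    simp [Metric.mem_closedBall, dist_zero_right] at this
    linarith
  set F : Fin (n + 1) → (Fin (n + 1) → ℝ) → ℝ := fun i => if i = k then f else 0 with hF
  set F' : Fin (n + 1) → (Fin (n + 1) → ℝ) → (Fin (n + 1) → ℝ) →L[ℝ] ℝ :=
    fun i => if i = k then fderiv ℝ f else 0 with hF'
  have key := integral_divergence_of_hasFDerivAt_off_countable' A B hle F F' ∅
    countable_empty
    (fun i => by
      by_cases h : i = k
      · simp only [hF, if_pos h]; exact hf.continuous.continuousOn
      · simp only [hF, if_neg h]; exact continuous_zero.continuousOn)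
    (fun x _ i => by
      by_cases h : i = k
      · simpa [hF, hF', h] using (hf.differentiable one_ne_zero x).hasFDerivAt
      · simp only [hF, hF', if_neg h]; exact hasFDerivAt_const (0 : ℝ) x)
    (by
      apply (ContinuousOn.integrableOn_compact isCompact_Icc)
      apply Continuous.continuousOn
      have : Continuous (fderiv ℝ f) := (hf.fderiv_right (m := 0) le_rfl).continuous
      continuity)
  have hub : ∀ x : Fin (n + 1) → ℝ, R < ‖x‖ → ∀ v, fderiv ℝ f x v = 0 := by
    intro x hx v
    have hxn : x ∉ tsupport f := by
      intro hmem
      have := hR hmem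
      simp [Metric.mem_closedBall, dist_zero_right] at this
      linarith
    have : fderiv ℝ f x = 0 := by
      by_contra h
      exact hxn (support_fderiv_subset ℝ (Function.mem_support.2 h))
    simp [this]
  have hlhs : (∫ x in Icc A B, ∑ i, F' i x (Pi.single i 1)) = ∫ x, pd k f x := by
    have h1 : ∀ x, ∑ i, F' i x (Pi.single i 1) = pd k f x := by
      intro x
      rw [show (∑ i, F' i x (Pi.single i 1)) =
        ∑ i, (if i = k then fderiv ℝ f x (Pi.single i 1) else 0) from by
          refine Finset.sum_congr rfl fun i _ => ?_
          by_cases h : i = k <;> simp [hF', h]]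
      simp [Finset.sum_ite_eq', pd]
    simp_rw [h1]
    apply setIntegral_eq_integral_of_forall_compl_eq_zero
    intro x hx
    simp only [Icc, mem_setOf_eq, not_and_or, Pi.le_def, not_forall] at hx
    have : R < ‖x‖ := by
      rcases hx with ⟨i, hi⟩ | ⟨i, hi⟩ <;>
      · have h2 : |x i| ≤ ‖x‖ := by
          simpa [Real.norm_eq_abs] using norm_le_pi_norm x i
        simp only [hA, hB] at hi
        cases abs_cases (x i) with
        | inl h => linarith [h.1]
        | inr h => linarith [h.1]
    exact hub x this _
  rw [hlhs] at key
  rw [key]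
  refine Finset.sum_eq_zero fun i _ => ?_
  by_cases h : i = k
  · subst h
    have hfront : ∀ x : Fin n → ℝ, F i ((Fin.insertNth i (B i) x : Fin (n+1) → ℝ)) = 0 := by
      intro x
      simp only [hF, if_pos rfl]
      apply hvanish
      have h1 := norm_le_pi_norm (Fin.insertNth i (B i) x : Fin (n+1) → ℝ) i
      simp only [Fin.insertNth_apply_same, Real.norm_eq_abs, hB] at h1
      have h2 : R + 1 ≤ ‖(Fin.insertNth i (B i) x : Fin (n+1) → ℝ)‖ :=
        le_trans (le_abs_self _) h1
      linarith
    have hback : ∀ x : Fin n → ℝ, F i ((Fin.insertNth i (A i) x : Fin (n+1) → ℝ)) = 0 := by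
      intro x
      simp only [hF, if_pos rfl]
      apply hvanish
      have h1 := norm_le_pi_norm (Fin.insertNth i (A i) x : Fin (n+1) → ℝ) i
      rw [Fin.insertNth_apply_same] at h1
      have h2 : R + 1 ≤ ‖(Fin.insertNth i (A i) x : Fin (n+1) → ℝ)‖ := by
        refine le_trans ?_ h1
        simp only [hA, Real.norm_eq_abs, abs_neg]
        rw [abs_of_nonneg] <;> linarith
      linarith
    simp [hfront, hback]
  · simp [hF, if_neg h]

lemma aux_pd_contDiff {m : ℕ} {f : (Fin m → ℝ) → ℝ} (hf : ContDiff ℝ 2 f) (j : Fin m) :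
    ContDiff ℝ 1 (pd j f) := by
  have h1 : ContDiff ℝ 1 (fderiv ℝ f) := hf.fderiv_right (by norm_num)
  exact (ContinuousLinearMap.apply ℝ ℝ (Pi.single j 1)).contDiff.comp h1

lemma aux_pd_comm {m : ℕ} {f : (Fin m → ℝ) → ℝ} (hf : ContDiff ℝ 2 f) (j k : Fin m)
    (x : Fin m → ℝ) : pd j (pd k f) x = pd k (pd j f) x := by
  have hsym := hf.contDiffAt (x := x) |>.isSymmSndFDerivAt (by simp)
  have hd : ContDiff ℝ 1 (fderiv ℝ f) := hf.fderiv_right (by norm_num)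
  have key : ∀ v w : Fin m → ℝ,
      fderiv ℝ (fun y => fderiv ℝ f y v) x w = fderiv ℝ (fderiv ℝ f) x w v := by
    intro v w
    have h1 : fderiv ℝ (fun y => fderiv ℝ f y v) x
        = (fderiv ℝ f x).comp (fderiv ℝ (fun _ : Fin m → ℝ => v) x)
          + (fderiv ℝ (fderiv ℝ f) x).flip v :=
      fderiv_clm_apply (hd.differentiable one_ne_zero x) (differentiableAt_const v)
    rw [h1]
    simp [fderiv_const]
  show fderiv ℝ (fun y => fderiv ℝ f y (Pi.single k 1)) x (Pi.single j 1)
      = fderiv ℝ (fun y => fderiv ℝ f y (Pi.single j 1)) x (Pi.single k 1)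
  rw [key, key, hsym]

lemma aux_pd_mul {m : ℕ} {f g : (Fin m → ℝ) → ℝ} {x : Fin m → ℝ}
    (hf : DifferentiableAt ℝ f x) (hg : DifferentiableAt ℝ g x) (k : Fin m) :
    pd k (fun y => f y * g y) x = pd k f x * g x + f x * pd k g x := by
  rw [pd, fderiv_fun_mul hf hg]
  simp only [ContinuousLinearMap.add_apply, ContinuousLinearMap.smul_apply, smul_eq_mul, pd]
  ring

theorem stmt10 (n : ℕ) (Ω : Set (Fin (n + 1) → ℝ)) (hΩo : IsOpen Ω)
    (hΩb : Bornology.IsBounded Ω)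
    (a : (Fin (n + 1) → ℝ) → Fin (n + 1) → Fin (n + 1) → ℝ)
    (ha : ContDiff ℝ 1 a) (has : HasCompactSupport a)
    (hanti : ∀ x j k, a x j k = -a x k j)
    (hdiv : ∀ k x, ∑ j, pd j (fun y => a y j k) x = 0) :
    ∀ u₁ u₂ : (Fin (n + 1) → ℝ) → ℝ, IsHarm u₁ → IsHarm u₂ →
      ∑ j, ∑ k, ∫ x, a x j k * pd j u₁ x * pd k u₂ x = 0 := by
  intro u₁ u₂ h₁ h₂
  obtain ⟨hu₁, -⟩ := h₁
  obtain ⟨hu₂, -⟩ := h₂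
  have hu₂1 : ContDiff ℝ 1 u₂ := hu₂.of_le (by norm_num)
  -- components of `a` are C¹ with compact support
  have haC : ∀ j k : Fin (n+1), ContDiff ℝ 1 (fun x => a x j k) := by
    intro j k
    exact ((ContinuousLinearMap.proj (R := ℝ) (φ := fun _ : Fin (n+1) => ℝ) k).contDiff.comp
      ((ContinuousLinearMap.proj (R := ℝ)
        (φ := fun _ : Fin (n+1) => Fin (n+1) → ℝ) j).contDiff.comp ha) :)
  have hacs : ∀ j k : Fin (n+1), HasCompactSupport (fun x => a x j k) := by
    intro j k
    apply has.mono
    intro x hx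
    simp only [Function.mem_support] at hx ⊢
    intro h; exact hx (by rw [h]; rfl)
  have hpd1 : ∀ j, ContDiff ℝ 1 (pd j u₁) := aux_pd_contDiff hu₁
  have hpd2 : ∀ k, ContDiff ℝ 1 (pd k u₂) := aux_pd_contDiff hu₂
  -- the auxiliary vector field components
  have hgC : ∀ j k : Fin (n+1), ContDiff ℝ 1 (fun y => a y j k * pd j u₁ y * u₂ y) :=
    fun j k => ((haC j k).mul (hpd1 j)).mul hu₂1
  have hgcs : ∀ j k : Fin (n+1), HasCompactSupport (fun y => a y j k * pd j u₁ y * u₂ y) := by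
    intro j k
    apply (hacs j k).mono
    intro x hx
    simp only [Function.mem_support] at hx ⊢
    intro h; apply hx; rw [h]; ring
  have hint0 : ∀ j k : Fin (n+1), ∫ x, pd k (fun y => a y j k * pd j u₁ y * u₂ y) x = 0 :=
    fun j k => aux_integral_pd_eq_zero _ (hgC j k) (hgcs j k) k
  -- integrability of everything in sight
  have hcont_t : ∀ j k : Fin (n+1), Continuous (fun x => a x j k * pd j u₁ x * pd k u₂ x) :=
    fun j k => (((haC j k).continuous.mul (hpd1 j).continuous).mul (hpd2 k).continuous)
  have hint_t : ∀ j k : Fin (n+1),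
      Integrable (fun x => a x j k * pd j u₁ x * pd k u₂ x) := by
    intro j k
    apply Continuous.integrable_of_hasCompactSupport (hcont_t j k)
    apply (hacs j k).mono
    intro x hx
    simp only [Function.mem_support] at hx ⊢
    intro h; apply hx; rw [h]; ring
  have hint_pd : ∀ j k : Fin (n+1),
      Integrable (pd k (fun y => a y j k * pd j u₁ y * u₂ y)) := by
    intro j k
    apply Continuous.integrable_of_hasCompactSupport
    · have hc : Continuous (fderiv ℝ (fun y => a y j k * pd j u₁ y * u₂ y)) :=
        ((hgC j k).fderiv_right (m := 0) le_rfl).continuous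
      exact (ContinuousLinearMap.apply ℝ ℝ (Pi.single k 1)).continuous.comp hc
    · exact (hgcs j k).fderiv_apply ℝ (Pi.single k 1)
  -- key pointwise identity
  have hpt : ∀ x, ∑ j, ∑ k, a x j k * pd j u₁ x * pd k u₂ x
      = ∑ k, ∑ j, pd k (fun y => a y j k * pd j u₁ y * u₂ y) x := by
    intro x
    have hprod : ∀ j k : Fin (n+1), pd k (fun y => a y j k * pd j u₁ y * u₂ y) x =
        pd k (fun y => a y j k) x * pd j u₁ x * u₂ x
        + a x j k * pd k (pd j u₁) x * u₂ x
        + a x j k * pd j u₁ x * pd k u₂ x := by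
      intro j k
      rw [aux_pd_mul (f := fun y => a y j k * pd j u₁ y) (((haC j k).differentiable one_ne_zero x).mul
          ((hpd1 j).differentiable one_ne_zero x)) (hu₂1.differentiable one_ne_zero x),
        aux_pd_mul ((haC j k).differentiable one_ne_zero x) ((hpd1 j).differentiable one_ne_zero x)]
      ring
    simp_rw [hprod]
    rw [show (∑ k, ∑ j, (pd k (fun y => a y j k) x * pd j u₁ x * u₂ x
        + a x j k * pd k (pd j u₁) x * u₂ x
        + a x j k * pd j u₁ x * pd k u₂ x))
      = (∑ k, ∑ j, pd k (fun y => a y j k) x * pd j u₁ x * u₂ x)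
        + (∑ k, ∑ j, a x j k * pd k (pd j u₁) x * u₂ x)
        + (∑ k, ∑ j, a x j k * pd j u₁ x * pd k u₂ x) from by
        simp [Finset.sum_add_distrib]]
    have hS1 : (∑ k, ∑ j, pd k (fun y => a y j k) x * pd j u₁ x * u₂ x) = 0 := by
      rw [Finset.sum_comm]
      refine Finset.sum_eq_zero fun j _ => ?_
      have : ∀ k : Fin (n+1), pd k (fun y => a y j k) x
          = -pd k (fun y => a y k j) x := by
        intro k
        have hfun : (fun y => a y j k) = fun y => -(a y k j) := funext fun y => hanti y j k
        show fderiv ℝ (fun y => a y j k) x (Pi.single k 1) = -(fderiv ℝ (fun y => a y k j) x (Pi.single k 1))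
        rw [hfun, fderiv_fun_neg]
        simp
      calc (∑ k, pd k (fun y => a y j k) x * pd j u₁ x * u₂ x)
          = (∑ k, pd k (fun y => a y j k) x) * (pd j u₁ x * u₂ x) := by
            rw [Finset.sum_mul]; congr 1; ext k; ring
        _ = 0 := by
            rw [show (∑ k, pd k (fun y => a y j k) x) = 0 from by
              simp_rw [this]; simp [hdiv j x]]
            ring
    have hS2 : (∑ k, ∑ j, a x j k * pd k (pd j u₁) x * u₂ x) = 0 := by
      have hswap : (∑ k, ∑ j, a x j k * pd k (pd j u₁) x * u₂ x)
          = ∑ k, ∑ j, -(a x j k * pd k (pd j u₁) x * u₂ x) := by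
        conv_lhs => rw [Finset.sum_comm]
        refine Finset.sum_congr rfl fun k _ => Finset.sum_congr rfl fun j _ => ?_
        rw [hanti x k j, aux_pd_comm hu₁ j k]
        ring
      have := hswap
      simp only [Finset.sum_neg_distrib] at this
      linarith
    rw [hS1, hS2, Finset.sum_comm]
    ring
  -- put everything together
  have step1 : ∑ j, ∑ k, ∫ x, a x j k * pd j u₁ x * pd k u₂ x
      = ∫ x, ∑ j, ∑ k, a x j k * pd j u₁ x * pd k u₂ x := by
    rw [integral_finset_sum _ fun j _ => integrable_finset_sum _ fun k _ => hint_t j k]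
    refine Finset.sum_congr rfl fun j _ => ?_
    rw [integral_finset_sum _ fun k _ => hint_t j k]
  rw [step1]
  rw [integral_congr_ae (Filter.Eventually.of_forall hpt)]
  rw [integral_finset_sum _ fun k _ => integrable_finset_sum _ fun j _ => hint_pd j k]
  refine Finset.sum_eq_zero fun k _ => ?_
  rw [integral_finset_sum _ fun j _ => hint_pd j k]
  exact Finset.sum_eq_zero fun j _ => hint0 j k
end

section
/- Let C^a : ℝ^{1+n} → ℝ^{(1+n)×(1+n)} be a compactly supported smooth antisymmetric matrix field (C^a_{jk} = −C^a_{kj}) such that Σ_{j,k} ∫ C^a_{jk}(x) ∂ⱼu₁(x) ∂_k u₂(x) dx = 0 for all harmonic functions u₁, u₂ on ℝ^{1+n}. Then Σⱼ ∂ⱼ C^a_{jk} = 0 for every k = 0,…,n. -/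
open MeasureTheory

namespace Aux12

open Real FourierTransform Complex
open scoped RealInnerProductSpace

variable {m : ℕ}

noncomputable def dotC (a : Fin m → ℝ) : (Fin m → ℝ) →L[ℝ] ℝ :=
  ∑ j, a j • (ContinuousLinearMap.proj j : (Fin m → ℝ) →L[ℝ] ℝ)

lemma dotC_apply (a x : Fin m → ℝ) : dotC a x = ∑ j, a j * x j := by
  simp [dotC]

lemma dotC_single (a : Fin m → ℝ) (j : Fin m) : dotC a (Pi.single j 1) = a j := by
  rw [dotC_apply]
  rw [Finset.sum_eq_single j]
  · simp
  · intro k _ hk; simp [Pi.single_apply, hk]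
  · simp

lemma dotC_neg (b x : Fin m → ℝ) : dotC (-b) x = -(dotC b x) := by
  simp [dotC_apply, Finset.sum_neg_distrib]

lemma dotC_smul (c : ℝ) (b x : Fin m → ℝ) : dotC (c • b) x = c * dotC b x := by
  simp [dotC_apply, Finset.mul_sum, mul_assoc]

noncomputable def EF (a b : Fin m → ℝ) (x : Fin m → ℝ) : ℝ :=
  Real.exp (dotC b x) * Real.cos (dotC a x)

noncomputable def SF (a b : Fin m → ℝ) (x : Fin m → ℝ) : ℝ :=
  Real.exp (dotC b x) * Real.sin (dotC a x)

lemma contDiff_EF (a b : Fin m → ℝ) : ContDiff ℝ 2 (EF a b) :=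
  ((Real.contDiff_exp.of_le le_top).comp (dotC b).contDiff).mul
    ((Real.contDiff_cos.of_le le_top).comp (dotC a).contDiff)

lemma contDiff_SF (a b : Fin m → ℝ) : ContDiff ℝ 2 (SF a b) :=
  ((Real.contDiff_exp.of_le le_top).comp (dotC b).contDiff).mul
    ((Real.contDiff_sin.of_le le_top).comp (dotC a).contDiff)

lemma hasFDerivAt_EF (a b x : Fin m → ℝ) :
    HasFDerivAt (EF a b) (EF a b x • dotC b - SF a b x • dotC a) x := by
  have h1 : HasFDerivAt (fun x => Real.exp (dotC b x)) (Real.exp (dotC b x) • dotC b) x :=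
    (Real.hasDerivAt_exp _).comp_hasFDerivAt x (dotC b).hasFDerivAt
  have h2 : HasFDerivAt (fun x => Real.cos (dotC a x)) ((-Real.sin (dotC a x)) • dotC a) x :=
    (Real.hasDerivAt_cos _).comp_hasFDerivAt x (dotC a).hasFDerivAt
  have := h1.mul h2
  refine this.congr_fderiv ?_
  unfold EF SF
  ext v
  simp
  ring

lemma hasFDerivAt_SF (a b x : Fin m → ℝ) :
    HasFDerivAt (SF a b) (SF a b x • dotC b + EF a b x • dotC a) x := by
  have h1 : HasFDerivAt (fun x => Real.exp (dotC b x)) (Real.exp (dotC b x) • dotC b) x :=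
    (Real.hasDerivAt_exp _).comp_hasFDerivAt x (dotC b).hasFDerivAt
  have h2 : HasFDerivAt (fun x => Real.sin (dotC a x)) ((Real.cos (dotC a x)) • dotC a) x :=
    (Real.hasDerivAt_sin _).comp_hasFDerivAt x (dotC a).hasFDerivAt
  have := h1.mul h2
  refine this.congr_fderiv ?_
  unfold EF SF
  ext v
  simp
  ring

lemma pd_EF (a b : Fin m → ℝ) (j : Fin m) (x : Fin m → ℝ) :
    pd j (EF a b) x = b j * EF a b x - a j * SF a b x := by
  rw [pd, (hasFDerivAt_EF a b x).fderiv]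
  simp [dotC_single]
  ring

lemma pd_SF (a b : Fin m → ℝ) (j : Fin m) (x : Fin m → ℝ) :
    pd j (SF a b) x = b j * SF a b x + a j * EF a b x := by
  rw [pd, (hasFDerivAt_SF a b x).fderiv]
  simp [dotC_single]
  ring

lemma diffAt_EF (a b : Fin m → ℝ) (x : Fin m → ℝ) : DifferentiableAt ℝ (EF a b) x :=
  ((contDiff_EF a b).differentiable (by norm_num)).differentiableAt

lemma diffAt_SF (a b : Fin m → ℝ) (x : Fin m → ℝ) : DifferentiableAt ℝ (SF a b) x :=
  ((contDiff_SF a b).differentiable (by norm_num)).differentiableAt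

lemma pd_pd_EF (a b : Fin m → ℝ) (j : Fin m) (x : Fin m → ℝ) :
    pd j (pd j (EF a b)) x
      = b j * (b j * EF a b x - a j * SF a b x) - a j * (b j * SF a b x + a j * EF a b x) := by
  have hf : pd j (EF a b) = fun y => b j * EF a b y - a j * SF a b y := funext (pd_EF a b j)
  rw [hf, pd]
  rw [fderiv_fun_sub ((diffAt_EF a b x).const_mul _) ((diffAt_SF a b x).const_mul _)]
  rw [fderiv_const_mul (diffAt_EF a b x), fderiv_const_mul (diffAt_SF a b x)]
  simp only [ContinuousLinearMap.sub_apply, ContinuousLinearMap.smul_apply, smul_eq_mul]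
  rw [← pd, ← pd, pd_EF, pd_SF]

lemma pd_pd_SF (a b : Fin m → ℝ) (j : Fin m) (x : Fin m → ℝ) :
    pd j (pd j (SF a b)) x
      = b j * (b j * SF a b x + a j * EF a b x) + a j * (b j * EF a b x - a j * SF a b x) := by
  have hf : pd j (SF a b) = fun y => b j * SF a b y + a j * EF a b y := funext (pd_SF a b j)
  rw [hf, pd]
  rw [fderiv_fun_add ((diffAt_SF a b x).const_mul _) ((diffAt_EF a b x).const_mul _)]
  rw [fderiv_const_mul (diffAt_SF a b x), fderiv_const_mul (diffAt_EF a b x)]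
  simp only [ContinuousLinearMap.add_apply, ContinuousLinearMap.smul_apply, smul_eq_mul]
  rw [← pd, ← pd, pd_SF, pd_EF]

lemma isHarm_EF (a b : Fin m → ℝ) (hab : ∑ j, a j * b j = 0)
    (hn : ∑ j, (a j) ^ 2 = ∑ j, (b j) ^ 2) : IsHarm (EF a b) := by
  refine ⟨contDiff_EF a b, fun x => ?_⟩
  have : ∀ j : Fin m, pd j (pd j (EF a b)) x
      = ((b j) ^ 2 - (a j) ^ 2) * EF a b x - (a j * b j) * (2 * SF a b x) := by
    intro j; rw [pd_pd_EF]; ring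
  rw [Finset.sum_congr rfl (fun j _ => this j)]
  rw [Finset.sum_sub_distrib, ← Finset.sum_mul, ← Finset.sum_mul, Finset.sum_sub_distrib,
    hn, hab]
  ring

lemma isHarm_SF (a b : Fin m → ℝ) (hab : ∑ j, a j * b j = 0)
    (hn : ∑ j, (a j) ^ 2 = ∑ j, (b j) ^ 2) : IsHarm (SF a b) := by
  refine ⟨contDiff_SF a b, fun x => ?_⟩
  have : ∀ j : Fin m, pd j (pd j (SF a b)) x
      = ((b j) ^ 2 - (a j) ^ 2) * SF a b x + (a j * b j) * (2 * EF a b x) := by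
    intro j; rw [pd_pd_SF]; ring
  rw [Finset.sum_congr rfl (fun j _ => this j)]
  rw [Finset.sum_add_distrib, ← Finset.sum_mul, ← Finset.sum_mul, Finset.sum_sub_distrib,
    hn, hab]
  ring

/-! ### Contraction identities for antisymmetric matrices -/

lemma swap_sum (M T : Fin m → Fin m → ℝ) (hM : ∀ j k, M j k = -M k j) :
    ∑ j, ∑ k, M j k * T k j = - ∑ j, ∑ k, M j k * T j k := by
  rw [Finset.sum_comm]
  rw [← Finset.sum_neg_distrib]
  refine Finset.sum_congr rfl fun k _ => ?_
  rw [← Finset.sum_neg_distrib]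
  refine Finset.sum_congr rfl fun j _ => ?_
  rw [hM j k]; ring

lemma contract (M T : Fin m → Fin m → ℝ) (hM : ∀ j k, M j k = -M k j) :
    ∑ j, ∑ k, M j k * T j k = (∑ j, ∑ k, M j k * (T j k - T k j)) / 2 := by
  have : ∑ j, ∑ k, M j k * (T j k - T k j)
      = ∑ j, ∑ k, M j k * T j k - ∑ j, ∑ k, M j k * T k j := by
    rw [← Finset.sum_sub_distrib]
    refine Finset.sum_congr rfl fun j _ => ?_
    rw [← Finset.sum_sub_distrib]
    exact Finset.sum_congr rfl fun k _ => by ring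
  rw [this, swap_sum M T hM]
  ring

lemma contract_zero (M T : Fin m → Fin m → ℝ) (hM : ∀ j k, M j k = -M k j)
    (hT : ∀ j k, T j k = T k j) : ∑ j, ∑ k, M j k * T j k = 0 := by
  rw [contract M T hM]
  have : ∀ j k, M j k * (T j k - T k j) = 0 := fun j k => by rw [hT j k]; ring
  simp [this]

lemma contract_ab (M : Fin m → Fin m → ℝ) (hM : ∀ j k, M j k = -M k j)
    (a b : Fin m → ℝ) (G : ℝ) :
    ∑ j, ∑ k, M j k * ((a j * b k - a k * b j) * G)
      = 2 * ((∑ j, ∑ k, M j k * a j * b k) * G) := by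
  have hsplit : ∑ j, ∑ k, M j k * ((a j * b k - a k * b j) * G)
      = ∑ j, ∑ k, M j k * (a j * b k * G) - ∑ j, ∑ k, M j k * ((fun j k => a j * b k * G) k j) := by
    rw [← Finset.sum_sub_distrib]
    refine Finset.sum_congr rfl fun j _ => ?_
    rw [← Finset.sum_sub_distrib]
    exact Finset.sum_congr rfl fun k _ => by ring
  have hswap := swap_sum M (fun j k => a j * b k * G) hM
  have hpull : (∑ j, ∑ k, M j k * a j * b k) * G = ∑ j, ∑ k, M j k * (a j * b k * G) := by
    rw [Finset.sum_mul]
    refine Finset.sum_congr rfl fun j _ => ?_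
    rw [Finset.sum_mul]
    exact Finset.sum_congr rfl fun k _ => by ring
  simp only at hswap hsplit
  rw [hsplit, hpull]
  linarith [hswap]

/-! ### Pointwise identities for the bilinear form evaluated on exponentials -/

lemma sum_EE (M : Fin m → Fin m → ℝ) (hM : ∀ j k, M j k = -M k j)
    (a b x : Fin m → ℝ) :
    ∑ j, ∑ k, M j k * pd j (EF a b) x * pd k (EF a (-b)) x
      = (∑ j, ∑ k, M j k * a j * b k) * Real.sin (2 * dotC a x) := by
  have hpq : Real.exp (dotC b x) * Real.exp (dotC (-b) x) = 1 := by
    rw [dotC_neg, ← Real.exp_add]; simp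
  rw [dotC_neg] at hpq
  have key : ∀ j k : Fin m,
      (fun j k => pd j (EF a b) x * pd k (EF a (-b)) x) j k
        - (fun j k => pd j (EF a b) x * pd k (EF a (-b)) x) k j
      = (a j * b k - a k * b j) * Real.sin (2 * dotC a x) := by
    intro j k
    simp only [pd_EF, EF, SF, dotC_neg, Real.sin_two_mul, Pi.neg_apply]
    linear_combination (2 * Real.cos (dotC a x) * Real.sin (dotC a x)
      * (a j * b k - a k * b j)) * hpq
  calc ∑ j, ∑ k, M j k * pd j (EF a b) x * pd k (EF a (-b)) x
      = ∑ j, ∑ k, M j k * ((fun j k => pd j (EF a b) x * pd k (EF a (-b)) x) j k) :=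
        Finset.sum_congr rfl fun j _ => Finset.sum_congr rfl fun k _ => by
          simp only; ring
    _ = (∑ j, ∑ k, M j k * ((fun j k => pd j (EF a b) x * pd k (EF a (-b)) x) j k
          - (fun j k => pd j (EF a b) x * pd k (EF a (-b)) x) k j)) / 2 :=
        contract M _ hM
    _ = (∑ j, ∑ k, M j k * ((a j * b k - a k * b j) * Real.sin (2 * dotC a x))) / 2 := by
        rw [Finset.sum_congr rfl fun j _ => Finset.sum_congr rfl fun k _ => by rw [key j k]]
    _ = (∑ j, ∑ k, M j k * a j * b k) * Real.sin (2 * dotC a x) := by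
        rw [contract_ab M hM]; ring

lemma sum_ES (M : Fin m → Fin m → ℝ) (hM : ∀ j k, M j k = -M k j)
    (a b x : Fin m → ℝ) :
    ∑ j, ∑ k, M j k * pd j (EF a b) x * pd k (SF a (-b)) x
      = (∑ j, ∑ k, M j k * a j * b k) * (-Real.cos (2 * dotC a x)) := by
  have hpq : Real.exp (dotC b x) * Real.exp (dotC (-b) x) = 1 := by
    rw [dotC_neg, ← Real.exp_add]; simp
  rw [dotC_neg] at hpq
  have hsc : Real.sin (dotC a x) ^ 2 + Real.cos (dotC a x) ^ 2 = 1 :=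
    Real.sin_sq_add_cos_sq _
  have key : ∀ j k : Fin m,
      (fun j k => pd j (EF a b) x * pd k (SF a (-b)) x) j k
        - (fun j k => pd j (EF a b) x * pd k (SF a (-b)) x) k j
      = (a j * b k - a k * b j) * (-Real.cos (2 * dotC a x)) := by
    intro j k
    simp only [pd_EF, pd_SF, EF, SF, dotC_neg, Real.cos_two_mul, Pi.neg_apply]
    linear_combination ((Real.sin (dotC a x) ^ 2 - Real.cos (dotC a x) ^ 2)
      * (a j * b k - a k * b j)) * hpq + (a j * b k - a k * b j) * hsc
  calc ∑ j, ∑ k, M j k * pd j (EF a b) x * pd k (SF a (-b)) x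
      = ∑ j, ∑ k, M j k * ((fun j k => pd j (EF a b) x * pd k (SF a (-b)) x) j k) :=
        Finset.sum_congr rfl fun j _ => Finset.sum_congr rfl fun k _ => by
          simp only; ring
    _ = (∑ j, ∑ k, M j k * ((fun j k => pd j (EF a b) x * pd k (SF a (-b)) x) j k
          - (fun j k => pd j (EF a b) x * pd k (SF a (-b)) x) k j)) / 2 :=
        contract M _ hM
    _ = (∑ j, ∑ k, M j k * ((a j * b k - a k * b j) * (-Real.cos (2 * dotC a x)))) / 2 := by
        rw [Finset.sum_congr rfl fun j _ => Finset.sum_congr rfl fun k _ => by rw [key j k]]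
    _ = (∑ j, ∑ k, M j k * a j * b k) * (-Real.cos (2 * dotC a x)) := by
        rw [contract_ab M hM]; ring

lemma sum_sq_pos {a : Fin m → ℝ} (ha : a ≠ 0) : 0 < ∑ j, a j ^ 2 := by
  obtain ⟨j, hj⟩ := Function.ne_iff.mp ha
  exact Finset.sum_pos' (fun i _ => sq_nonneg _)
    ⟨j, Finset.mem_univ j, lt_of_le_of_ne (sq_nonneg _) (Ne.symm (pow_ne_zero 2 hj))⟩

lemma lipschitzWith_one_cos : LipschitzWith 1 Real.cos := by
  apply lipschitzWith_of_nnnorm_deriv_le Real.differentiable_cos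
  intro x
  rw [Real.deriv_cos]
  rw [← NNReal.coe_le_coe]
  simp [Real.abs_sin_le_one x]

lemma lipschitzWith_one_sin : LipschitzWith 1 Real.sin := by
  apply lipschitzWith_of_nnnorm_deriv_le Real.differentiable_sin
  intro x
  rw [Real.deriv_sin]
  rw [← NNReal.coe_le_coe]
  simp [Real.abs_cos_le_one x]

/-! ### Fourier uniqueness -/

lemma eq_zero_of_trig (g : (Fin m → ℝ) → ℝ) (hgc : Continuous g)
    (hgs : HasCompactSupport g)
    (hcos : ∀ v, ∫ x, g x * Real.cos (dotC v x) = 0)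
    (hsin : ∀ v, ∫ x, g x * Real.sin (dotC v x) = 0) : ∀ x, g x = 0 := by
  set e := (MeasurableEquiv.toLp 2 (Fin m → ℝ)).symm with he_def
  have hvol : MeasurePreserving e := EuclideanSpace.volume_preserving_symm_measurableEquiv_toLp (Fin m)
  set fC : (Fin m → ℝ) → ℂ := fun x => (g x : ℂ) with hfC_def
  have hfCc : Continuous fC := Complex.continuous_ofReal.comp hgc
  have hfCs : HasCompactSupport fC := by
    have : fC = (fun t : ℝ => (t : ℂ)) ∘ g := rfl
    rw [this]; exact hgs.comp_left rfl
  have hfCi : Integrable fC := hfCc.integrable_of_hasCompactSupport hfCs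
  set G : EuclideanSpace ℝ (Fin m) → ℂ := fun y => fC (e y) with hG_def
  have hGi : Integrable G :=
    (hvol.integrable_comp_emb e.measurableEmbedding).mpr hfCi
  have hGc : Continuous G := by
    have : Continuous (⇑e) := by
      rw [he_def]
      exact PiLp.continuous_ofLp (p := 2) (β := fun _ : Fin m => ℝ)
    exact hfCc.comp this
  have hFT : 𝓕 G = 0 := by
    funext w
    rw [Real.fourier_eq']
    set v : Fin m → ℝ := fun i => (-2 * π) * (e w) i with hv_def
    have hcoord : ∀ y : EuclideanSpace ℝ (Fin m),
        -2 * π * ((inner ℝ y w : ℝ)) = dotC v (e y) := by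
      intro y
      rw [dotC_apply, PiLp.inner_apply]
      simp only [RCLike.inner_apply, starRingEnd_apply, star_trivial]
      rw [Finset.mul_sum]
      refine Finset.sum_congr rfl fun i _ => ?_
      have h1 : e y i = y i := rfl
      have h2 : e w i = w i := rfl
      rw [hv_def]
      simp only [h1, h2]
      ring
    have step : ∀ y : EuclideanSpace ℝ (Fin m),
        Complex.exp ((↑(-2 * π * ((inner ℝ y w : ℝ)))) * Complex.I) • G y
          = (fun x => ((g x * Real.cos (dotC v x) : ℝ) : ℂ)
              + ((g x * Real.sin (dotC v x) : ℝ) : ℂ) * Complex.I) (e y) := by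
      intro y
      simp only [hG_def, hfC_def, smul_eq_mul]
      rw [hcoord y, Complex.exp_mul_I]
      push_cast
      ring
    rw [show (fun y => Complex.exp ((↑(-2 * π * ((inner ℝ y w : ℝ)))) * Complex.I) • G y)
        = fun y => (fun x => ((g x * Real.cos (dotC v x) : ℝ) : ℂ)
          + ((g x * Real.sin (dotC v x) : ℝ) : ℂ) * Complex.I) (e y) from funext step]
    have trans := hvol.integral_comp e.measurableEmbedding
      (fun x => ((g x * Real.cos (dotC v x) : ℝ) : ℂ)
        + ((g x * Real.sin (dotC v x) : ℝ) : ℂ) * Complex.I)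
    rw [Pi.zero_apply]
    refine Eq.trans trans ?_
    have int1 : Integrable (fun x => ((g x * Real.cos (dotC v x) : ℝ) : ℂ)) := by
      apply Integrable.ofReal
      exact ((hgc.mul ((Real.continuous_cos).comp (dotC v).continuous)).integrable_of_hasCompactSupport
        hgs.mul_right)
    have int2 : Integrable (fun x => ((g x * Real.sin (dotC v x) : ℝ) : ℂ) * Complex.I) := by
      apply Integrable.mul_const
      apply Integrable.ofReal
      exact ((hgc.mul ((Real.continuous_sin).comp (dotC v).continuous)).integrable_of_hasCompactSupport
        hgs.mul_right)
    rw [integral_add int1 int2, integral_mul_const]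
    have c1 : (∫ a, ((g a * Real.cos (dotC v a) : ℝ) : ℂ))
        = ((∫ a, g a * Real.cos (dotC v a) : ℝ) : ℂ) := integral_ofReal
    have c2 : (∫ a, ((g a * Real.sin (dotC v a) : ℝ) : ℂ))
        = ((∫ a, g a * Real.sin (dotC v a) : ℝ) : ℂ) := integral_ofReal
    rw [c1, c2, hcos v, hsin v]
    simp
  have hinv := hGc.fourierInv_fourier_eq hGi (by rw [hFT]; exact integrable_zero _ _ _)
  rw [hFT] at hinv
  have hG0 : ∀ y, G y = 0 := by
    intro y
    rw [← hinv]
    rw [Real.fourierInv_eq]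
    simp
  intro x
  have := hG0 (e.symm x)
  rw [hG_def] at this
  simp only [hfC_def] at this
  rw [MeasurableEquiv.apply_symm_apply] at this
  exact_mod_cast this

/-! ### Lemmas about `Ca` -/

section main

variable (Ca : (Fin m → ℝ) → Fin m → Fin m → ℝ)

lemma continuous_entry (hsm : ContDiff ℝ (⊤ : ℕ∞) Ca) (j k : Fin m) :
    Continuous fun x => Ca x j k :=
  (continuous_apply k).comp ((continuous_apply j).comp hsm.continuous)

lemma contDiff_entry (hsm : ContDiff ℝ (⊤ : ℕ∞) Ca) (j k : Fin m) :
    ContDiff ℝ (⊤ : ℕ∞) (fun x => Ca x j k) :=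
  (((ContinuousLinearMap.proj k).comp
    (ContinuousLinearMap.proj j :
      ((Fin m → Fin m → ℝ)) →L[ℝ] (Fin m → ℝ))).contDiff).comp hsm

lemma hcs_entry (hcs : HasCompactSupport Ca) (j k : Fin m) :
    HasCompactSupport fun x => Ca x j k := by
  have : (fun x => Ca x j k) = (fun M : Fin m → Fin m → ℝ => M j k) ∘ Ca := rfl
  rw [this]
  exact hcs.comp_left rfl

lemma continuous_EF (a b : Fin m → ℝ) : Continuous (EF a b) :=
  (contDiff_EF a b).continuous

lemma continuous_SF (a b : Fin m → ℝ) : Continuous (SF a b) :=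
  (contDiff_SF a b).continuous

lemma continuous_pd_EF (a b : Fin m → ℝ) (j : Fin m) : Continuous (pd j (EF a b)) := by
  rw [show pd j (EF a b) = fun x => b j * EF a b x - a j * SF a b x from funext (pd_EF a b j)]
  exact (continuous_const.mul (continuous_EF a b)).sub (continuous_const.mul (continuous_SF a b))

lemma continuous_pd_SF (a b : Fin m → ℝ) (j : Fin m) : Continuous (pd j (SF a b)) := by
  rw [show pd j (SF a b) = fun x => b j * SF a b x + a j * EF a b x from funext (pd_SF a b j)]
  exact (continuous_const.mul (continuous_SF a b)).add (continuous_const.mul (continuous_EF a b))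

lemma integrable_entry_mul (hsm : ContDiff ℝ (⊤ : ℕ∞) Ca) (hcs : HasCompactSupport Ca)
    {g : (Fin m → ℝ) → ℝ} (hg : Continuous g) (j k : Fin m) :
    Integrable (fun x => Ca x j k * g x) :=
  (((continuous_entry Ca hsm j k).mul hg).integrable_of_hasCompactSupport
    ((hcs_entry Ca hcs j k).mul_right))

lemma int_sin (hsm : ContDiff ℝ (⊤ : ℕ∞) Ca) (hcs : HasCompactSupport Ca)
    (hanti : ∀ x j k, Ca x j k = -Ca x k j) (a b : Fin m → ℝ) (hab : ∑ j, a j * b j = 0)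
    (hn : ∑ j, (a j) ^ 2 = ∑ j, (b j) ^ 2)
    (h : ∀ u₁ u₂ : (Fin m → ℝ) → ℝ, IsHarm u₁ → IsHarm u₂ →
      ∑ j, ∑ k, ∫ x, Ca x j k * pd j u₁ x * pd k u₂ x = 0) :
    ∫ x, (∑ j, ∑ k, Ca x j k * a j * b k) * Real.sin (2 * dotC a x) = 0 := by
  have hab' : ∑ j, a j * (-b) j = 0 := by
    simpa [Finset.sum_neg_distrib] using hab
  have hn' : ∑ j, (a j) ^ 2 = ∑ j, ((-b) j) ^ 2 := by simpa using hn
  have H := h (EF a b) (EF a (-b)) (isHarm_EF a b hab hn) (isHarm_EF a (-b) hab' hn')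
  have hint : ∀ j k : Fin m,
      Integrable (fun x => Ca x j k * pd j (EF a b) x * pd k (EF a (-b)) x) := by
    intro j k
    have : (fun x => Ca x j k * pd j (EF a b) x * pd k (EF a (-b)) x)
        = fun x => Ca x j k * (pd j (EF a b) x * pd k (EF a (-b)) x) := by
      funext x; ring
    rw [this]
    exact integrable_entry_mul Ca hsm hcs
      ((continuous_pd_EF a b j).mul (continuous_pd_EF a (-b) k)) j k
  rw [Finset.sum_congr rfl (fun j _ =>
    (integral_finset_sum Finset.univ (fun k _ => hint j k)).symm)] at H
  rw [(integral_finset_sum Finset.univ (fun j _ =>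
    integrable_finset_sum Finset.univ (fun k _ => hint j k))).symm] at H
  rw [show (fun x => ∑ j, ∑ k, Ca x j k * pd j (EF a b) x * pd k (EF a (-b)) x)
      = fun x => (∑ j, ∑ k, Ca x j k * a j * b k) * Real.sin (2 * dotC a x) from
    funext fun x => sum_EE (Ca x) (hanti x) a b x] at H
  exact H

lemma int_cos (hsm : ContDiff ℝ (⊤ : ℕ∞) Ca) (hcs : HasCompactSupport Ca)
    (hanti : ∀ x j k, Ca x j k = -Ca x k j) (a b : Fin m → ℝ) (hab : ∑ j, a j * b j = 0)
    (hn : ∑ j, (a j) ^ 2 = ∑ j, (b j) ^ 2)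
    (h : ∀ u₁ u₂ : (Fin m → ℝ) → ℝ, IsHarm u₁ → IsHarm u₂ →
      ∑ j, ∑ k, ∫ x, Ca x j k * pd j u₁ x * pd k u₂ x = 0) :
    ∫ x, (∑ j, ∑ k, Ca x j k * a j * b k) * Real.cos (2 * dotC a x) = 0 := by
  have hab' : ∑ j, a j * (-b) j = 0 := by
    simpa [Finset.sum_neg_distrib] using hab
  have hn' : ∑ j, (a j) ^ 2 = ∑ j, ((-b) j) ^ 2 := by simpa using hn
  have H := h (EF a b) (SF a (-b)) (isHarm_EF a b hab hn) (isHarm_SF a (-b) hab' hn')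
  have hint : ∀ j k : Fin m,
      Integrable (fun x => Ca x j k * pd j (EF a b) x * pd k (SF a (-b)) x) := by
    intro j k
    have : (fun x => Ca x j k * pd j (EF a b) x * pd k (SF a (-b)) x)
        = fun x => Ca x j k * (pd j (EF a b) x * pd k (SF a (-b)) x) := by
      funext x; ring
    rw [this]
    exact integrable_entry_mul Ca hsm hcs
      ((continuous_pd_EF a b j).mul (continuous_pd_SF a (-b) k)) j k
  rw [Finset.sum_congr rfl (fun j _ =>
    (integral_finset_sum Finset.univ (fun k _ => hint j k)).symm)] at H
  rw [(integral_finset_sum Finset.univ (fun j _ =>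
    integrable_finset_sum Finset.univ (fun k _ => hint j k))).symm] at H
  rw [show (fun x => ∑ j, ∑ k, Ca x j k * pd j (EF a b) x * pd k (SF a (-b)) x)
      = fun x => -((∑ j, ∑ k, Ca x j k * a j * b k) * Real.cos (2 * dotC a x)) from
    funext fun x => by rw [sum_ES (Ca x) (hanti x) a b x]; ring] at H
  rw [integral_neg, neg_eq_zero] at H
  exact H

lemma int_trig_perp (a b : Fin m → ℝ) (hab : ∑ j, a j * b j = 0) (g : ℝ → ℝ)
    (H : ∀ b' : Fin m → ℝ, (∑ j, a j * b' j = 0) → (∑ j, (a j) ^ 2 = ∑ j, (b' j) ^ 2) →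
      ∫ x, (∑ j, ∑ k, Ca x j k * a j * b' k) * g (2 * dotC a x) = 0)
    (ha : a ≠ 0) :
    ∫ x, (∑ j, ∑ k, Ca x j k * a j * b k) * g (2 * dotC a x) = 0 := by
  by_cases hb : b = 0
  · simp [hb]
  · have hb2 : 0 < ∑ j, b j ^ 2 := sum_sq_pos hb
    have ha2 : 0 < ∑ j, a j ^ 2 := sum_sq_pos ha
    set r := Real.sqrt ((∑ j, a j ^ 2) / (∑ j, b j ^ 2)) with hr_def
    have hr : 0 < r := Real.sqrt_pos.mpr (by positivity)
    have hr2 : r ^ 2 = (∑ j, a j ^ 2) / (∑ j, b j ^ 2) := Real.sq_sqrt (by positivity)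
    have h1 : ∑ j, a j * (r • b) j = 0 := by
      have : ∑ j, a j * (r • b) j = r * ∑ j, a j * b j := by
        rw [Finset.mul_sum]
        exact Finset.sum_congr rfl fun j _ => by simp; ring
      rw [this, hab, mul_zero]
    have h2 : ∑ j, (a j) ^ 2 = ∑ j, ((r • b) j) ^ 2 := by
      have : ∑ j, ((r • b) j) ^ 2 = r ^ 2 * ∑ j, b j ^ 2 := by
        rw [Finset.mul_sum]
        exact Finset.sum_congr rfl fun j _ => by simp; ring
      rw [this, hr2]
      field_simp
    have H' := H (r • b) h1 h2
    have hpt : (fun x => (∑ j, ∑ k, Ca x j k * a j * (r • b) k) * g (2 * dotC a x))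
        = fun x => r * ((∑ j, ∑ k, Ca x j k * a j * b k) * g (2 * dotC a x)) := by
      funext x
      have : ∑ j, ∑ k, Ca x j k * a j * (r • b) k
          = r * ∑ j, ∑ k, Ca x j k * a j * b k := by
        rw [Finset.mul_sum]
        refine Finset.sum_congr rfl fun j _ => ?_
        rw [Finset.mul_sum]
        exact Finset.sum_congr rfl fun k _ => by simp; ring
      rw [this]; ring
    rw [hpt, integral_const_mul] at H'
    rcases mul_eq_zero.mp H' with h | h
    · exact absurd h hr.ne'
    · exact h

lemma int_single (hanti : ∀ x j k, Ca x j k = -Ca x k j)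
    (Hsin : ∀ a b : Fin m → ℝ, (∑ j, a j * b j = 0) →
      (∑ j, (a j) ^ 2 = ∑ j, (b j) ^ 2) →
      ∫ x, (∑ j, ∑ k, Ca x j k * a j * b k) * Real.sin (2 * dotC a x) = 0)
    (Hcos : ∀ a b : Fin m → ℝ, (∑ j, a j * b j = 0) →
      (∑ j, (a j) ^ 2 = ∑ j, (b j) ^ 2) →
      ∫ x, (∑ j, ∑ k, Ca x j k * a j * b k) * Real.cos (2 * dotC a x) = 0)
    (v : Fin m → ℝ) (k₀ : Fin m) :
    (∫ x, (∑ j, Ca x j k₀ * v j) * Real.sin (dotC v x) = 0) ∧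
    (∫ x, (∑ j, Ca x j k₀ * v j) * Real.cos (dotC v x) = 0) := by
  by_cases hv : v = 0
  · constructor <;> simp [hv]
  · set a : Fin m → ℝ := (2 : ℝ)⁻¹ • v with ha_def
    have ha : a ≠ 0 := smul_ne_zero (by norm_num) hv
    have ha2 : 0 < ∑ j, a j ^ 2 := sum_sq_pos ha
    set t : ℝ := a k₀ / ∑ j, a j ^ 2 with ht_def
    set b : Fin m → ℝ := (Pi.single k₀ 1 : Fin m → ℝ) - t • a with hb_def
    have hsingle : ∀ (c : Fin m → ℝ), ∑ j, c j * (Pi.single k₀ 1 : Fin m → ℝ) j = c k₀ := by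
      intro c
      rw [Finset.sum_eq_single k₀]
      · simp
      · intro k _ hk; simp [Pi.single_apply, hk]
      · simp
    have hab : ∑ j, a j * b j = 0 := by
      have : ∑ j, a j * b j
          = (∑ j, a j * (Pi.single k₀ 1 : Fin m → ℝ) j) - t * ∑ j, a j ^ 2 := by
        rw [Finset.mul_sum, ← Finset.sum_sub_distrib]
        exact Finset.sum_congr rfl fun j _ => by simp [hb_def]; ring
      rw [this, hsingle a, ht_def]
      field_simp
      ring
    have hpt : ∀ x, ∑ j, Ca x j k₀ * a j = ∑ j, ∑ k, Ca x j k * a j * b k := by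
      intro x
      have hsym : ∑ j, ∑ k, Ca x j k * (a j * a k) = 0 :=
        contract_zero (Ca x) (fun j k => a j * a k) (hanti x) (fun j k => by ring)
      have expand : ∑ j, ∑ k, Ca x j k * a j * b k
          = (∑ j, Ca x j k₀ * a j) - t * ∑ j, ∑ k, Ca x j k * (a j * a k) := by
        rw [Finset.mul_sum, ← Finset.sum_sub_distrib]
        refine Finset.sum_congr rfl fun j _ => ?_
        have hterm : ∀ k, Ca x j k * a j * b k
            = Ca x j k * a j * (Pi.single k₀ 1 : Fin m → ℝ) k - t * (Ca x j k * (a j * a k)) := by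
          intro k; simp [hb_def]; ring
        rw [Finset.sum_congr rfl fun k _ => hterm k, Finset.sum_sub_distrib,
          hsingle (fun k => Ca x j k * a j), Finset.mul_sum]
      rw [expand, hsym]
      ring
    have hva : ∀ j, v j = 2 * a j := by
      intro j; simp [ha_def]
    have hdv : ∀ x, dotC v x = 2 * dotC a x := by
      intro x
      have : v = (2:ℝ) • a := by
        funext j; simp [hva j]
      rw [this, dotC_smul]
    have key : ∀ g : ℝ → ℝ,
        (∫ x, (∑ j, ∑ k, Ca x j k * a j * b k) * g (2 * dotC a x) = 0) →
        ∫ x, (∑ j, Ca x j k₀ * v j) * g (dotC v x) = 0 := by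
      intro g hg
      have : (fun x => (∑ j, Ca x j k₀ * v j) * g (dotC v x))
          = fun x => 2 * ((∑ j, ∑ k, Ca x j k * a j * b k) * g (2 * dotC a x)) := by
        funext x
        rw [hdv x, ← hpt x]
        have : ∑ j, Ca x j k₀ * v j = 2 * ∑ j, Ca x j k₀ * a j := by
          rw [Finset.mul_sum]
          exact Finset.sum_congr rfl fun j _ => by rw [hva j]; ring
        rw [this]; ring
      rw [this, integral_const_mul, hg, mul_zero]
    constructor
    · exact key _ (int_trig_perp Ca a b hab _ (fun b' h1 h2 => Hsin a b' h1 h2) ha)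
    · exact key _ (int_trig_perp Ca a b hab _ (fun b' h1 h2 => Hcos a b' h1 h2) ha)

lemma ibp_cos (hsm : ContDiff ℝ (⊤ : ℕ∞) Ca) (hcs : HasCompactSupport Ca)
    (j k₀ : Fin m) (v : Fin m → ℝ) :
    ∫ x, pd j (fun y => Ca y j k₀) x * Real.cos (dotC v x)
      = ∫ x, (v j * Real.sin (dotC v x)) * Ca x j k₀ := by
  set g : (Fin m → ℝ) → ℝ := fun y => Ca y j k₀ with hg_def
  have hgC : HasCompactSupport g := hcs_entry Ca hcs j k₀
  have hgD : ContDiff ℝ (⊤ : ℕ∞) g := contDiff_entry Ca hsm j k₀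
  obtain ⟨K, hgL⟩ := ContDiff.lipschitzWith_of_hasCompactSupport hgC hgD (by simp)
  have hfL : LipschitzWith (1 * ‖dotC v‖₊) (fun x => Real.cos (dotC v x)) :=
    lipschitzWith_one_cos.comp (dotC v).lipschitz
  have hf : ∀ x, HasFDerivAt (fun y => Real.cos (dotC v y))
      ((-Real.sin (dotC v x)) • dotC v) x := fun x =>
    (Real.hasDerivAt_cos _).comp_hasFDerivAt x (dotC v).hasFDerivAt
  have H := LipschitzWith.integral_lineDeriv_mul_eq (μ := volume) hfL hgL hgC (Pi.single j 1)
  have e1 : (fun x => lineDeriv ℝ (fun y => Real.cos (dotC v y)) x (Pi.single j 1) * g x)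
      = fun x => (-Real.sin (dotC v x) * v j) * Ca x j k₀ := by
    funext x
    rw [(hf x).differentiableAt.lineDeriv_eq_fderiv, (hf x).fderiv]
    simp [dotC_single, hg_def]
  have e2 : (fun x => lineDeriv ℝ g x (-Pi.single j 1) * Real.cos (dotC v x))
      = fun x => -(pd j (fun y => Ca y j k₀) x) * Real.cos (dotC v x) := by
    funext x
    have hd : DifferentiableAt ℝ g x := (hgD.differentiable (by simp)).differentiableAt
    rw [hd.lineDeriv_eq_fderiv, map_neg]
    rfl
  rw [e1, e2] at H
  calc ∫ x, pd j (fun y => Ca y j k₀) x * Real.cos (dotC v x)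
      = - ∫ x, -(pd j (fun y => Ca y j k₀) x) * Real.cos (dotC v x) := by
        rw [← integral_neg]; congr 1; funext x; ring
    _ = - ∫ x, (-Real.sin (dotC v x) * v j) * Ca x j k₀ := by rw [H]
    _ = ∫ x, (v j * Real.sin (dotC v x)) * Ca x j k₀ := by
        rw [← integral_neg]; congr 1; funext x; ring

lemma ibp_sin (hsm : ContDiff ℝ (⊤ : ℕ∞) Ca) (hcs : HasCompactSupport Ca)
    (j k₀ : Fin m) (v : Fin m → ℝ) :
    ∫ x, pd j (fun y => Ca y j k₀) x * Real.sin (dotC v x)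
      = - ∫ x, (v j * Real.cos (dotC v x)) * Ca x j k₀ := by
  set g : (Fin m → ℝ) → ℝ := fun y => Ca y j k₀ with hg_def
  have hgC : HasCompactSupport g := hcs_entry Ca hcs j k₀
  have hgD : ContDiff ℝ (⊤ : ℕ∞) g := contDiff_entry Ca hsm j k₀
  obtain ⟨K, hgL⟩ := ContDiff.lipschitzWith_of_hasCompactSupport hgC hgD (by simp)
  have hfL : LipschitzWith (1 * ‖dotC v‖₊) (fun x => Real.sin (dotC v x)) :=
    lipschitzWith_one_sin.comp (dotC v).lipschitz
  have hf : ∀ x, HasFDerivAt (fun y => Real.sin (dotC v y))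
      ((Real.cos (dotC v x)) • dotC v) x := fun x =>
    (Real.hasDerivAt_sin _).comp_hasFDerivAt x (dotC v).hasFDerivAt
  have H := LipschitzWith.integral_lineDeriv_mul_eq (μ := volume) hfL hgL hgC (Pi.single j 1)
  have e1 : (fun x => lineDeriv ℝ (fun y => Real.sin (dotC v y)) x (Pi.single j 1) * g x)
      = fun x => (v j * Real.cos (dotC v x)) * Ca x j k₀ := by
    funext x
    rw [(hf x).differentiableAt.lineDeriv_eq_fderiv, (hf x).fderiv]
    simp only [ContinuousLinearMap.smul_apply, smul_eq_mul, dotC_single, hg_def]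
    ring
  have e2 : (fun x => lineDeriv ℝ g x (-Pi.single j 1) * Real.sin (dotC v x))
      = fun x => -(pd j (fun y => Ca y j k₀) x) * Real.sin (dotC v x) := by
    funext x
    have hd : DifferentiableAt ℝ g x := (hgD.differentiable (by simp)).differentiableAt
    rw [hd.lineDeriv_eq_fderiv, map_neg]
    rfl
  rw [e1, e2] at H
  calc ∫ x, pd j (fun y => Ca y j k₀) x * Real.sin (dotC v x)
      = - ∫ x, -(pd j (fun y => Ca y j k₀) x) * Real.sin (dotC v x) := by
        rw [← integral_neg]; congr 1; funext x; ring
    _ = - ∫ x, (v j * Real.cos (dotC v x)) * Ca x j k₀ := by rw [H]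

end main
end Aux12

theorem stmt12 (n : ℕ) (hn : 1 ≤ n)
    (Ca : (Fin (n + 1) → ℝ) → Fin (n + 1) → Fin (n + 1) → ℝ)
    (hsm : ContDiff ℝ (⊤ : ℕ∞) Ca) (hcs : HasCompactSupport Ca)
    (hanti : ∀ x j k, Ca x j k = -Ca x k j)
    (h : ∀ u₁ u₂ : (Fin (n + 1) → ℝ) → ℝ, IsHarm u₁ → IsHarm u₂ →
      ∑ j, ∑ k, ∫ x, Ca x j k * pd j u₁ x * pd k u₂ x = 0) :
    ∀ k, ∀ x, ∑ j, pd j (fun y => Ca y j k) x = 0 := by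
  intro k₀
  -- the integral identities at arbitrary frequency
  have hS := fun (v : Fin (n + 1) → ℝ) => (Aux12.int_single Ca hanti
    (fun a b hab hnorm => Aux12.int_sin Ca hsm hcs hanti a b hab hnorm h)
    (fun a b hab hnorm => Aux12.int_cos Ca hsm hcs hanti a b hab hnorm h) v k₀)
  -- continuity / support of the divergence
  set g : (Fin (n + 1) → ℝ) → ℝ := fun x => ∑ j, pd j (fun y => Ca y j k₀) x with hg_def
  have hpd_cont : ∀ j : Fin (n + 1), Continuous (pd j (fun y => Ca y j k₀)) := by
    intro j
    have := ((Aux12.contDiff_entry Ca hsm j k₀).continuous_fderiv (by simp))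
    exact this.clm_apply continuous_const
  have hpd_cs : ∀ j : Fin (n + 1), HasCompactSupport (pd j (fun y => Ca y j k₀)) := by
    intro j
    exact (Aux12.hcs_entry Ca hcs j k₀).fderiv_apply ℝ (Pi.single j 1)
  have hgc : Continuous g := by
    rw [hg_def]
    exact continuous_finset_sum _ (fun j _ => hpd_cont j)
  have hgs : HasCompactSupport g := by
    rw [hg_def]
    induction (Finset.univ : Finset (Fin (n + 1))) using Finset.cons_induction with
    | empty => simp only [Finset.sum_empty]; exact HasCompactSupport.zero
    | cons a s ha ih =>
        simp only [Finset.sum_cons]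
        exact (hpd_cs a).add ih
  -- the Fourier coefficients of g vanish
  have hint1 : ∀ (j : Fin (n + 1)) (v : Fin (n + 1) → ℝ) (tr : ℝ → ℝ), Continuous tr →
      Integrable (fun x => pd j (fun y => Ca y j k₀) x * tr (Aux12.dotC v x)) := by
    intro j v tr htr
    exact ((hpd_cont j).mul (htr.comp (Aux12.dotC v).continuous)).integrable_of_hasCompactSupport
      (hpd_cs j).mul_right
  have hint2 : ∀ (j : Fin (n + 1)) (v : Fin (n + 1) → ℝ) (tr : ℝ → ℝ), Continuous tr →
      Integrable (fun x => (v j * tr (Aux12.dotC v x)) * Ca x j k₀) := by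
    intro j v tr htr
    exact (((continuous_const.mul (htr.comp (Aux12.dotC v).continuous))).mul
      (Aux12.continuous_entry Ca hsm j k₀)).integrable_of_hasCompactSupport
      (Aux12.hcs_entry Ca hcs j k₀).mul_left
  have hcos : ∀ v, ∫ x, g x * Real.cos (Aux12.dotC v x) = 0 := by
    intro v
    have step1 : (fun x => g x * Real.cos (Aux12.dotC v x))
        = fun x => ∑ j, pd j (fun y => Ca y j k₀) x * Real.cos (Aux12.dotC v x) := by
      funext x
      rw [hg_def]
      rw [Finset.sum_mul]
    rw [step1, integral_finset_sum _ (fun j _ => hint1 j v _ Real.continuous_cos)]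
    rw [Finset.sum_congr rfl (fun j _ => Aux12.ibp_cos Ca hsm hcs j k₀ v)]
    rw [← integral_finset_sum _ (fun j _ => hint2 j v _ Real.continuous_sin)]
    have step2 : (fun x => ∑ j, (v j * Real.sin (Aux12.dotC v x)) * Ca x j k₀)
        = fun x => (∑ j, Ca x j k₀ * v j) * Real.sin (Aux12.dotC v x) := by
      funext x
      rw [Finset.sum_mul]
      exact Finset.sum_congr rfl fun j _ => by ring
    rw [step2]
    exact (hS v).1
  have hsin : ∀ v, ∫ x, g x * Real.sin (Aux12.dotC v x) = 0 := by
    intro v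
    have step1 : (fun x => g x * Real.sin (Aux12.dotC v x))
        = fun x => ∑ j, pd j (fun y => Ca y j k₀) x * Real.sin (Aux12.dotC v x) := by
      funext x
      rw [hg_def]
      rw [Finset.sum_mul]
    rw [step1, integral_finset_sum _ (fun j _ => hint1 j v _ Real.continuous_sin)]
    rw [Finset.sum_congr rfl (fun j _ => Aux12.ibp_sin Ca hsm hcs j k₀ v)]
    rw [Finset.sum_neg_distrib, neg_eq_zero]
    rw [← integral_finset_sum _ (fun j _ => hint2 j v _ Real.continuous_cos)]
    have step2 : (fun x => ∑ j, (v j * Real.cos (Aux12.dotC v x)) * Ca x j k₀)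
        = fun x => (∑ j, Ca x j k₀ * v j) * Real.cos (Aux12.dotC v x) := by
      funext x
      rw [Finset.sum_mul]
      exact Finset.sum_congr rfl fun j _ => by ring
    rw [step2]
    exact (hS v).2
  exact Aux12.eq_zero_of_trig g hgc hgs hcos hsin
end

section
/- Let B : ℝ^{1+n} → ℝ^{(1+n)×(1+n)} be a compactly supported smooth symmetric matrix field with Σ_k ∂_k B_{jk} = 0 for all j, and suppose that for every ξ ∈ ℝ^{1+n} \ {0} and every unit vector μ ⊥ ξ the Fourier transform satisfies B̂(ξ) : (ξ ⊗ ξ + |ξ|² μ ⊗ μ) = 0. Then B = 0. -/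
open MeasureTheory

open Finset Complex FourierTransform RealInnerProductSpace


lemma alg {m : ℕ} (ξ : Fin m → ℝ) (hξ : ξ ≠ 0) (b : Fin m → Fin m → ℂ)
    (hsymb : ∀ j k, b j k = b k j)
    (hrow : ∀ j, ∑ k, (ξ k : ℂ) * b j k = 0)
    (hQ : ∀ μ : Fin m → ℝ, (∑ i, ξ i * μ i = 0) → (∑ i, (μ i) ^ 2 = 1) →
      ∑ j, ∑ k, b j k * ((ξ j * ξ k + (∑ i, (ξ i) ^ 2) * μ j * μ k : ℝ) : ℂ) = 0) :
    ∀ j k, b j k = 0 := by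
  set s : ℝ := ∑ i, (ξ i) ^ 2 with hs_def
  obtain ⟨i0, hi0⟩ : ∃ i, ξ i ≠ 0 := Function.ne_iff.mp hξ
  have hs : 0 < s := Finset.sum_pos' (fun i _ => sq_nonneg _)
    ⟨i0, Finset.mem_univ i0, by positivity⟩
  have hcol : ∀ k, ∑ p, (ξ p : ℂ) * b p k = 0 := by
    intro k
    calc ∑ p, (ξ p : ℂ) * b p k = ∑ p, (ξ p : ℂ) * b k p :=
          Finset.sum_congr rfl fun p _ => by rw [hsymb]
      _ = 0 := hrow k
  have hξξ : ∑ j, ∑ k, b j k * (ξ j : ℂ) * (ξ k : ℂ) = 0 := by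
    apply Finset.sum_eq_zero
    intro j _
    calc ∑ k, b j k * (ξ j : ℂ) * (ξ k : ℂ) = (ξ j : ℂ) * ∑ k, (ξ k : ℂ) * b j k := by
          rw [Finset.mul_sum]; exact Finset.sum_congr rfl fun k _ => by ring
      _ = 0 := by rw [hrow j, mul_zero]
  have hQ0 : ∀ μ : Fin m → ℝ, (∑ i, ξ i * μ i = 0) →
      ∑ j, ∑ k, b j k * (μ j : ℂ) * (μ k : ℂ) = 0 := by
    intro μ hperp
    by_cases hμ : μ = 0
    · simp [hμ]
    obtain ⟨i1, hi1⟩ : ∃ i, μ i ≠ 0 := Function.ne_iff.mp hμ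
    have ht : 0 < ∑ i, (μ i) ^ 2 := Finset.sum_pos' (fun i _ => sq_nonneg _)
      ⟨i1, Finset.mem_univ i1, by positivity⟩
    set t : ℝ := ∑ i, (μ i) ^ 2 with ht_def
    set c : ℝ := (Real.sqrt t)⁻¹ with hc_def
    have hsqrt : 0 < Real.sqrt t := Real.sqrt_pos.mpr ht
    have hc2 : c ^ 2 * t = 1 := by
      rw [hc_def, inv_pow, Real.sq_sqrt ht.le]
      field_simp
    have h1 := hQ (fun i => c * μ i)
      (by
        have : ∑ i, ξ i * (c * μ i) = c * ∑ i, ξ i * μ i := by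
          rw [Finset.mul_sum]; exact Finset.sum_congr rfl fun i _ => by ring
        rw [this, hperp, mul_zero])
      (by
        have : ∑ i, (c * μ i) ^ 2 = c ^ 2 * ∑ i, (μ i) ^ 2 := by
          rw [Finset.mul_sum]; exact Finset.sum_congr rfl fun i _ => by ring
        rw [this, ← ht_def, hc2])
    have expand : ∑ j, ∑ k, b j k * ((ξ j * ξ k + s * (c * μ j) * (c * μ k) : ℝ) : ℂ)
        = (∑ j, ∑ k, b j k * (ξ j : ℂ) * (ξ k : ℂ))
          + ((c : ℂ) ^ 2 * (s : ℂ)) * ∑ j, ∑ k, b j k * (μ j : ℂ) * (μ k : ℂ) := by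
      rw [Finset.mul_sum, ← Finset.sum_add_distrib]
      refine Finset.sum_congr rfl fun j _ => ?_
      rw [Finset.mul_sum, ← Finset.sum_add_distrib]
      refine Finset.sum_congr rfl fun k _ => ?_
      push_cast
      ring
    rw [expand, hξξ, zero_add] at h1
    have hcs : ((c : ℂ) ^ 2 * (s : ℂ)) ≠ 0 := by
      apply mul_ne_zero
      · have : c ≠ 0 := inv_ne_zero hsqrt.ne'
        exact pow_ne_zero _ (by exact_mod_cast this)
      · exact_mod_cast hs.ne'
    exact (mul_eq_zero.mp h1).resolve_left hcs
  have hBil : ∀ μ ν : Fin m → ℝ, (∑ i, ξ i * μ i = 0) → (∑ i, ξ i * ν i = 0) →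
      ∑ j, ∑ k, b j k * (μ j : ℂ) * (ν k : ℂ) = 0 := by
    intro μ ν hμ hν
    have h1 := hQ0 (μ + ν) (by
      have : ∑ i, ξ i * (μ + ν) i = (∑ i, ξ i * μ i) + ∑ i, ξ i * ν i := by
        rw [← Finset.sum_add_distrib]; exact Finset.sum_congr rfl fun i _ => by
          simp [mul_add]
      rw [this, hμ, hν, add_zero])
    have hswap : ∑ j, ∑ k, b j k * (ν j : ℂ) * (μ k : ℂ)
        = ∑ j, ∑ k, b j k * (μ j : ℂ) * (ν k : ℂ) := by
      rw [Finset.sum_comm]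
      refine Finset.sum_congr rfl fun j _ => Finset.sum_congr rfl fun k _ => by
        rw [hsymb]; ring
    have expand : ∑ j, ∑ k, b j k * (((μ + ν) j : ℝ) : ℂ) * (((μ + ν) k : ℝ) : ℂ)
        = (∑ j, ∑ k, b j k * (μ j : ℂ) * (μ k : ℂ))
          + ((∑ j, ∑ k, b j k * (ν j : ℂ) * (ν k : ℂ))
          + ((∑ j, ∑ k, b j k * (μ j : ℂ) * (ν k : ℂ))
          + ∑ j, ∑ k, b j k * (ν j : ℂ) * (μ k : ℂ))) := by
      rw [← Finset.sum_add_distrib, ← Finset.sum_add_distrib, ← Finset.sum_add_distrib]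
      refine Finset.sum_congr rfl fun j _ => ?_
      rw [← Finset.sum_add_distrib, ← Finset.sum_add_distrib, ← Finset.sum_add_distrib]
      refine Finset.sum_congr rfl fun k _ => ?_
      simp only [Pi.add_apply]
      push_cast
      ring
    rw [expand, hQ0 μ hμ, hQ0 ν hν, hswap, zero_add, zero_add] at h1
    have := h1
    linear_combination this / 2
  intro j k
  set μJ : Fin m → ℝ := fun p => (if j = p then (1 : ℝ) else 0) - ξ j * ξ p / s with hμJ
  set μK : Fin m → ℝ := fun p => (if k = p then (1 : ℝ) else 0) - ξ k * ξ p / s with hμK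
  have hperp : ∀ l : Fin m, ∑ i, ξ i * ((if l = i then (1 : ℝ) else 0) - ξ l * ξ i / s) = 0 := by
    intro l
    have hsplit : ∀ i, ξ i * ((if l = i then (1 : ℝ) else 0) - ξ l * ξ i / s)
        = ξ i * (if l = i then (1 : ℝ) else 0) - ξ i * (ξ l * ξ i / s) := fun i => by ring
    rw [Finset.sum_congr rfl fun i _ => hsplit i]
    have h1 : ∑ i, ξ i * (if l = i then (1 : ℝ) else 0) = ξ l := by
      simp [mul_ite]
    have h2 : ∑ i, ξ i * (ξ l * ξ i / s) = ξ l := by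
      have : ∑ i, ξ i * (ξ l * ξ i / s) = (ξ l / s) * ∑ i, (ξ i) ^ 2 := by
        rw [Finset.mul_sum]; exact Finset.sum_congr rfl fun i _ => by ring
      rw [this, ← hs_def]
      field_simp
    rw [Finset.sum_sub_distrib, h1, h2, sub_self]
  have hT := hBil μJ μK (hperp j) (hperp k)
  have inner_eq : ∀ p, ∑ q, b p q * (μJ p : ℂ) * (μK q : ℂ) = (μJ p : ℂ) * b p k := by
    intro p
    have : ∀ q, b p q * (μJ p : ℂ) * (μK q : ℂ)
        = (μJ p : ℂ) * (b p q * (if k = q then (1 : ℂ) else 0))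
          - (μJ p : ℂ) * ((ξ k : ℂ) / (s : ℂ)) * ((ξ q : ℂ) * b p q) := by
      intro q
      rw [hμK]
      push_cast [apply_ite Complex.ofReal]
      ring
    rw [Finset.sum_congr rfl fun q _ => this q, Finset.sum_sub_distrib]
    have h1 : ∑ q, (μJ p : ℂ) * (b p q * (if k = q then (1 : ℂ) else 0)) = (μJ p : ℂ) * b p k := by
      simp [mul_ite]
    have h2 : ∑ q, (μJ p : ℂ) * ((ξ k : ℂ) / (s : ℂ)) * ((ξ q : ℂ) * b p q) = 0 := by
      rw [← Finset.mul_sum, hrow p, mul_zero]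
    rw [h1, h2, sub_zero]
  rw [Finset.sum_congr rfl fun p _ => inner_eq p] at hT
  have final : ∑ p, (μJ p : ℂ) * b p k = b j k := by
    have : ∀ p, (μJ p : ℂ) * b p k
        = (if j = p then (1 : ℂ) else 0) * b p k - ((ξ j : ℂ) / (s : ℂ)) * ((ξ p : ℂ) * b p k) := by
      intro p
      rw [hμJ]
      push_cast [apply_ite Complex.ofReal]
      ring
    rw [Finset.sum_congr rfl fun p _ => this p, Finset.sum_sub_distrib]
    have h1 : ∑ p, (if j = p then (1 : ℂ) else 0) * b p k = b j k := by simp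
    have h2 : ∑ p, ((ξ j : ℂ) / (s : ℂ)) * ((ξ p : ℂ) * b p k) = 0 := by
      rw [← Finset.mul_sum, hcol k, mul_zero]
    rw [h1, h2, sub_zero]
  rw [final] at hT
  exact hT

section helpers


variable {m : ℕ} (ξ : Fin m → ℝ)

/-- the linear phase functional -/
noncomputable def Sl : (Fin m → ℝ) →L[ℝ] ℝ :=
  ∑ i, ξ i • (ContinuousLinearMap.proj i : (Fin m → ℝ) →L[ℝ] ℝ)

noncomputable def Ml : (Fin m → ℝ) →L[ℝ] ℂ :=
  (-Complex.I) • (Complex.ofRealCLM.comp (Sl ξ))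

lemma Ml_apply (y : Fin m → ℝ) :
    Ml ξ y = -Complex.I * ∑ i, (ξ i : ℂ) * (y i : ℂ) := by
  simp only [Ml, Sl, ContinuousLinearMap.smul_apply, ContinuousLinearMap.coe_comp',
    Function.comp_apply, ContinuousLinearMap.coe_sum', Finset.sum_apply,
    ContinuousLinearMap.smul_apply, ContinuousLinearMap.proj_apply, smul_eq_mul,
    Complex.ofRealCLM_apply]
  push_cast
  ring

lemma Ml_single (k : Fin m) : Ml ξ (Pi.single k 1) = -Complex.I * (ξ k : ℂ) := by
  rw [Ml_apply]
  congr 1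
  rw [Finset.sum_eq_single k]
  · simp
  · intro i _ hik
    simp [Pi.single_apply, hik]
  · simp

lemma exp_hasFDerivAt (x : Fin m → ℝ) :
    HasFDerivAt (fun y => Complex.exp (-Complex.I * ∑ i, (ξ i : ℂ) * (y i : ℂ)))
      (Complex.exp (-Complex.I * ∑ i, (ξ i : ℂ) * (x i : ℂ)) • Ml ξ) x := by
  have h : HasFDerivAt (fun y => Complex.exp (Ml ξ y)) (Complex.exp (Ml ξ x) • Ml ξ) x :=
    ((Ml ξ).hasFDerivAt (x := x)).cexp
  have e1 : (fun y => Complex.exp (Ml ξ y))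
      = fun y => Complex.exp (-Complex.I * ∑ i, (ξ i : ℂ) * (y i : ℂ)) := by
    funext y; rw [Ml_apply]
  rw [e1, Ml_apply] at h
  exact h

lemma exp_continuous :
    Continuous (fun y : Fin m → ℝ => Complex.exp (-Complex.I * ∑ i, (ξ i : ℂ) * (y i : ℂ))) := by
  apply Complex.continuous_exp.comp
  exact continuous_const.mul (continuous_finset_sum _ fun i _ =>
    continuous_const.mul (Complex.continuous_ofReal.comp (continuous_apply i)))

lemma int_exp_mul (h : (Fin m → ℝ) → ℝ) (hc : Continuous h) (hsupp : HasCompactSupport h) :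
    Integrable (fun x => Complex.exp (-Complex.I * ∑ i, (ξ i : ℂ) * (x i : ℂ)) * (h x : ℂ))
      (volume : Measure (Fin m → ℝ)) := by
  apply Continuous.integrable_of_hasCompactSupport
  · exact (exp_continuous ξ).mul (Complex.continuous_ofReal.comp hc)
  · exact HasCompactSupport.mul_left (hsupp.comp_left (g := fun t : ℝ => (t : ℂ)) (by simp))

lemma fderivC_eq (g : (Fin m → ℝ) → ℝ) (hg : ContDiff ℝ (⊤ : ℕ∞) g) (x : Fin m → ℝ)
    (v : Fin m → ℝ) :
    fderiv ℝ (fun y => (g y : ℂ)) x v = ((fderiv ℝ g x v : ℝ) : ℂ) := by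
  have h : HasFDerivAt (fun y => (g y : ℂ)) (Complex.ofRealCLM.comp (fderiv ℝ g x)) x :=
    (Complex.ofRealCLM.hasFDerivAt).comp x (hg.differentiable (by simp) x).hasFDerivAt
  rw [h.fderiv]
  rfl

lemma key_ibp (g : (Fin m → ℝ) → ℝ) (hg : ContDiff ℝ (⊤ : ℕ∞) g)
    (hgc : HasCompactSupport g) (k : Fin m) :
    ∫ x : Fin m → ℝ, Complex.exp (-Complex.I * ∑ i, (ξ i : ℂ) * (x i : ℂ)) * ((pd k g x : ℝ) : ℂ)
      = Complex.I * (ξ k : ℂ) *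
        ∫ x : Fin m → ℝ, Complex.exp (-Complex.I * ∑ i, (ξ i : ℂ) * (x i : ℂ)) * (g x : ℂ) := by
  set e : (Fin m → ℝ) → ℂ := fun y => Complex.exp (-Complex.I * ∑ i, (ξ i : ℂ) * (y i : ℂ))
    with he
  set gk : (Fin m → ℝ) → ℂ := fun y => (g y : ℂ) with hgk
  set v : Fin m → ℝ := Pi.single k 1 with hv
  have hgkC : ContDiff ℝ (⊤ : ℕ∞) gk := Complex.ofRealCLM.contDiff.comp hg
  have hgkcs : HasCompactSupport gk := hgc.comp_left (g := fun t : ℝ => (t : ℂ)) (by simp)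
  have hfd_e : ∀ x, fderiv ℝ e x = e x • Ml ξ := fun x => (exp_hasFDerivAt ξ x).fderiv
  have hfd_gk : ∀ x, fderiv ℝ gk x v = ((pd k g x : ℝ) : ℂ) := fun x =>
    fderivC_eq g hg x v
  have hcont_pd : Continuous fun x => ((pd k g x : ℝ) : ℂ) := by
    apply Complex.continuous_ofReal.comp
    have h1 : Continuous (fderiv ℝ g) := hg.continuous_fderiv (by simp)
    exact (ContinuousLinearMap.apply ℝ ℝ v).continuous.comp h1
  have hcs_pd : HasCompactSupport (fun x => ((pd k g x : ℝ) : ℂ)) :=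
    ((hgc.fderiv_apply ℝ v).comp_left (g := fun t : ℝ => (t : ℂ)) (by simp) : _)
  have h1 : ∫ x, e x * fderiv ℝ gk x v = - ∫ x, fderiv ℝ e x v * gk x := by
    apply integral_mul_fderiv_eq_neg_fderiv_mul_of_integrable
    · have hfun : (fun x => fderiv ℝ e x v * gk x) = fun x => Ml ξ v * (e x * gk x) := by
        funext x; rw [hfd_e x]; simp; ring
      rw [hfun]
      exact (int_exp_mul ξ g hg.continuous hgc).const_mul _
    · have hfun : (fun x => e x * fderiv ℝ gk x v) = fun x => e x * ((pd k g x : ℝ) : ℂ) := by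
        funext x; rw [hfd_gk x]
      rw [hfun]
      apply Continuous.integrable_of_hasCompactSupport
      · exact (exp_continuous ξ).mul hcont_pd
      · exact HasCompactSupport.mul_left hcs_pd
    · exact int_exp_mul ξ g hg.continuous hgc
    · exact fun x _ => (exp_hasFDerivAt ξ x).differentiableAt
    · exact fun x _ => hgkC.differentiable (by simp) x
  have h2 : (fun x => e x * fderiv ℝ gk x v) = fun x => e x * ((pd k g x : ℝ) : ℂ) := by
    funext x; rw [hfd_gk x]
  have h3 : (fun x => fderiv ℝ e x v * gk x) = fun x => (-Complex.I * (ξ k : ℂ)) * (e x * gk x) := by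
    funext x
    rw [hfd_e x]
    simp only [ContinuousLinearMap.smul_apply, smul_eq_mul, ← hv]
    rw [Ml_single]
    ring
  rw [h2, h3] at h1
  rw [h1, MeasureTheory.integral_const_mul]
  have hint : (∫ x, e x * gk x)
      = ∫ x : Fin m → ℝ, Complex.exp (-Complex.I * ∑ i, (ξ i : ℂ) * (x i : ℂ)) * (g x : ℂ) := rfl
  rw [hint]
  ring

end helpers

/-- The (unnormalized) Fourier transform used in the statement. -/
noncomputable def Ftr {m : ℕ} (ξ : Fin m → ℝ) (g : (Fin m → ℝ) → ℝ) : ℂ :=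
  ∫ x : Fin m → ℝ, Complex.exp (-Complex.I * ∑ i, (ξ i : ℂ) * (x i : ℂ)) * (g x : ℂ)

set_option maxHeartbeats 1000000 in
theorem stmt13 (n : ℕ) (hn : 1 ≤ n)
    (B : (Fin (n + 1) → ℝ) → Fin (n + 1) → Fin (n + 1) → ℝ)
    (hsm : ContDiff ℝ (⊤ : ℕ∞) B) (hcs : HasCompactSupport B)
    (hsym : ∀ x j k, B x j k = B x k j)
    (hdiv : ∀ j x, ∑ k, pd k (fun y => B y j k) x = 0)
    (hFT : ∀ ξ : Fin (n + 1) → ℝ, ξ ≠ 0 →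
      ∀ μ : Fin (n + 1) → ℝ, (∑ i, ξ i * μ i = 0) → (∑ i, (μ i) ^ 2 = 1) →
        ∑ j, ∑ k,
          (∫ x : Fin (n + 1) → ℝ,
            Complex.exp (-Complex.I * ∑ i, (ξ i : ℂ) * (x i : ℂ)) * (B x j k : ℂ))
            * ((ξ j * ξ k + (∑ i, (ξ i) ^ 2) * μ j * μ k : ℝ) : ℂ) = 0) :
    B = 0 := by
  classical
  have hBjk : ∀ j k, ContDiff ℝ (⊤ : ℕ∞) (fun x => B x j k) :=
    fun j k => (contDiff_pi.mp ((contDiff_pi.mp hsm) j)) k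
  have hcs_jk : ∀ j k, HasCompactSupport (fun x => B x j k) := fun j k =>
    HasCompactSupport.comp_left (g := fun v : Fin (n + 1) → Fin (n + 1) → ℝ => v j k) hcs rfl
  have hcsC : ∀ j k, HasCompactSupport (fun x => ((B x j k : ℝ) : ℂ)) := fun j k =>
    HasCompactSupport.comp_left (g := fun t : ℝ => (t : ℂ)) (hcs_jk j k) (by simp)
  -- Step A: divergence-free in Fourier
  have hdivF : ∀ ξ : Fin (n + 1) → ℝ, ∀ j,
      ∑ k, (ξ k : ℂ) * Ftr ξ (fun y => B y j k) = 0 := by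
    intro ξ j
    have hsum : ∑ k, Complex.I * (ξ k : ℂ) * Ftr ξ (fun y => B y j k) = 0 := by
      have heach : ∀ k : Fin (n + 1),
          Complex.I * (ξ k : ℂ) * Ftr ξ (fun y => B y j k)
          = ∫ x : Fin (n + 1) → ℝ,
              Complex.exp (-Complex.I * ∑ i, (ξ i : ℂ) * (x i : ℂ))
                * ((pd k (fun y => B y j k) x : ℝ) : ℂ) :=
        fun k => (key_ibp ξ (fun y => B y j k) (hBjk j k) (hcs_jk j k) k).symm
      rw [Finset.sum_congr rfl fun k _ => heach k, ← integral_finset_sum]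
      · have hzero : ∀ x : Fin (n + 1) → ℝ,
            ∑ k, Complex.exp (-Complex.I * ∑ i, (ξ i : ℂ) * (x i : ℂ))
              * ((pd k (fun y => B y j k) x : ℝ) : ℂ) = 0 := by
          intro x
          rw [← Finset.mul_sum]
          have : ∑ k, ((pd k (fun y => B y j k) x : ℝ) : ℂ)
              = (((∑ k, pd k (fun y => B y j k) x : ℝ)) : ℂ) := by push_cast; rfl
          rw [this, hdiv j x]
          simp
        rw [MeasureTheory.integral_congr_ae (Filter.Eventually.of_forall hzero)]
        simp
      · intro k _
        have hcontpd : Continuous (pd k (fun y => B y j k)) := by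
          have h1 : Continuous (fderiv ℝ (fun y => B y j k)) :=
            (hBjk j k).continuous_fderiv (by simp)
          exact (ContinuousLinearMap.apply ℝ ℝ (Pi.single k 1)).continuous.comp h1
        exact int_exp_mul ξ _ hcontpd ((hcs_jk j k).fderiv_apply ℝ (Pi.single k 1))
    have hfac : Complex.I * ∑ k, (ξ k : ℂ) * Ftr ξ (fun y => B y j k)
        = ∑ k, Complex.I * (ξ k : ℂ) * Ftr ξ (fun y => B y j k) := by
      rw [Finset.mul_sum]
      exact Finset.sum_congr rfl fun k _ => by ring
    have := hfac.trans hsum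
    exact (mul_eq_zero.mp this).resolve_left Complex.I_ne_zero
  -- Step B: Fourier transform vanishes away from 0
  have hF0 : ∀ ξ : Fin (n + 1) → ℝ, ξ ≠ 0 → ∀ j k, Ftr ξ (fun y => B y j k) = 0 := by
    intro ξ hξ
    apply alg ξ hξ (fun j k => Ftr ξ (fun y => B y j k))
    · intro j k
      exact congrArg (Ftr ξ) (funext fun y => by rw [hsym])
    · exact hdivF ξ
    · intro μ h1 h2
      exact hFT ξ hξ μ h1 h2
  -- Step C: invert the Fourier transform
  have hcomp : ∀ j k, ∀ y : Fin (n + 1) → ℝ, B y j k = 0 := by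
    intro j k
    have φ := EuclideanSpace.equiv (Fin (n + 1)) ℝ
    set f : EuclideanSpace ℝ (Fin (n + 1)) → ℂ :=
      fun x => ((B ((EuclideanSpace.equiv (Fin (n + 1)) ℝ) x) j k : ℝ) : ℂ) with hf
    have hcont : Continuous f :=
      (Complex.continuous_ofReal.comp (hBjk j k).continuous).comp
        (EuclideanSpace.equiv (Fin (n + 1)) ℝ).continuous
    have hsupp : HasCompactSupport f :=
      (hcsC j k).comp_isClosedEmbedding
        (EuclideanSpace.equiv (Fin (n + 1)) ℝ).toHomeomorph.isClosedEmbedding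
    have hint : Integrable f := hcont.integrable_of_hasCompactSupport hsupp
    have hFz : ∀ w : EuclideanSpace ℝ (Fin (n + 1)), w ≠ 0 → 𝓕 f w = 0 := by
      intro w hw
      rw [Real.fourier_eq']
      set ξ : Fin (n + 1) → ℝ := fun i => 2 * Real.pi * w i with hξdef
      have hξ0 : ξ ≠ 0 := by
        intro hcon
        apply hw
        ext i
        have := congrFun hcon i
        simp only [hξdef, Pi.zero_apply] at this
        have hπ : (2 : ℝ) * Real.pi ≠ 0 := by positivity
        simpa using (mul_eq_zero.mp this).resolve_left hπ
      have hexp : ∀ v : EuclideanSpace ℝ (Fin (n + 1)),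
          ((-2 * Real.pi * ⟪v, w⟫ : ℝ) : ℂ) * Complex.I
          = -Complex.I * ∑ i, (ξ i : ℂ) * (v i : ℂ) := by
        intro v
        have hin : ⟪v, w⟫ = ∑ i, v i * w i := by
          simp [PiLp.inner_apply, RCLike.inner_apply, conj_trivial, mul_comm]
        rw [hin, hξdef]
        push_cast
        simp only [Finset.mul_sum, Finset.sum_mul, neg_mul]
        exact Finset.sum_congr rfl fun i _ => by ring
      have hcongr : (∫ v : EuclideanSpace ℝ (Fin (n + 1)),
            Complex.exp (((-2 * Real.pi * ⟪v, w⟫ : ℝ) : ℂ) * Complex.I) • f v)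
          = ∫ v : EuclideanSpace ℝ (Fin (n + 1)),
              Complex.exp (-Complex.I * ∑ i, (ξ i : ℂ) * (v i : ℂ))
                * ((B ((EuclideanSpace.equiv (Fin (n + 1)) ℝ) v) j k : ℝ) : ℂ) := by
        refine MeasureTheory.integral_congr_ae (Filter.Eventually.of_forall fun v => ?_)
        dsimp only [hf]
        rw [hexp v, smul_eq_mul]
      rw [hcongr]
      have hmp := EuclideanSpace.volume_preserving_symm_measurableEquiv_toLp (Fin (n + 1))
      have key : (∫ v : EuclideanSpace ℝ (Fin (n + 1)),
              Complex.exp (-Complex.I * ∑ i, (ξ i : ℂ) * (v i : ℂ))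
                * ((B ((EuclideanSpace.equiv (Fin (n + 1)) ℝ) v) j k : ℝ) : ℂ))
          = Ftr ξ (fun y => B y j k) :=
        hmp.integral_comp (MeasurableEquiv.toLp 2 _).symm.measurableEmbedding
          (fun y : Fin (n + 1) → ℝ =>
            Complex.exp (-Complex.I * ∑ i, (ξ i : ℂ) * (y i : ℂ)) * ((B y j k : ℝ) : ℂ))
      rw [key]
      exact hF0 ξ hξ0 j k
    have hae : 𝓕 f =ᵐ[(volume : Measure (EuclideanSpace ℝ (Fin (n + 1))))]
        (0 : EuclideanSpace ℝ (Fin (n + 1)) → ℂ) := by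
      refine MeasureTheory.ae_iff.mpr ?_
      refine measure_mono_null (fun w hw => ?_)
        (measure_singleton (0 : EuclideanSpace ℝ (Fin (n + 1))))
      simp only [Set.mem_setOf_eq, Pi.zero_apply] at hw
      by_contra hne
      exact hw (hFz w (by simpa using hne))
    have hint2 : Integrable (𝓕 f) := (integrable_zero _ ℂ volume).congr hae.symm
    have hzero : ∀ x : EuclideanSpace ℝ (Fin (n + 1)), f x = 0 := by
      intro x
      have h1 := hint.fourierInv_fourier_eq hint2 (hcont.continuousAt (x := x))
      rw [← h1, Real.fourierInv_eq]
      have hv : ∀ᵐ v : EuclideanSpace ℝ (Fin (n + 1)) ∂volume,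
          (𝐞 (⟪v, x⟫) : Circle) • 𝓕 f v = (0 : ℂ) :=
        hae.mono fun v hv => by rw [hv]; simp
      exact MeasureTheory.integral_eq_zero_of_ae hv
    intro y
    have := hzero ((EuclideanSpace.equiv (Fin (n + 1)) ℝ).symm y)
    rw [hf] at this
    simp only [ContinuousLinearEquiv.apply_symm_apply] at this
    exact_mod_cast this
  funext x j k
  exact hcomp j k x
end
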